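/- Let K be a simplicial complex on vertex set [m], assume (X_i, A_i) is a pointed NDR-pair for each i = 1,…,m, and let F_i denote the homotopy fibre of the inclusion A_i → X_i. Then the sequence Z_K(CF,F) → Z_K(X,A) → ∏_{i=1}^m X_i is a homotopy fibration, where (CF,F) denotes the collection of pairs {(CF_i, F_i)}_{i=1}^m, the first map is induced by the natural maps of pairs (CF_i, F_i) → (X_i, A_i), and the second map is the inclusion of the polyhedral product into the full product. -/

import Mathlib

open scoped Topology
open ContinuousMap

noncomputable section

/-- The map on generalized loops induced by a continuous map. -/
def GenLoop.push {X Y : Type} [TopologicalSpace X] [TopologicalSpace Y] {N : Type} (f : C(X, Y))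
    {x : X} (p : GenLoop N X x) : GenLoop N Y (f x) :=
  ⟨f.comp p.1, fun t ht => by simp [p.2 t ht]⟩

/-- The map induced by a continuous map on homotopy groups (as pointed sets). -/
def piMap {X Y : Type} [TopologicalSpace X] [TopologicalSpace Y] (f : C(X, Y)) (N : Type) (x : X) :
    HomotopyGroup N X x → HomotopyGroup N Y (f x) :=
  Quotient.map (GenLoop.push f) (fun _ _ h => Nonempty.map (fun H => H.compContinuousMap f) h)

/-- A weakly contractible space: all homotopy groups (including `π₀`) are trivial. -/
def WeaklyContractible (X : Type) [TopologicalSpace X] : Prop :=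
  Nonempty X ∧ ∀ (x : X) (n : ℕ), Subsingleton (HomotopyGroup (Fin n) X x)

/-- A weak homotopy equivalence: induces bijections on all homotopy groups at all basepoints
(including `π₀`). -/
def IsWeakHomotopyEquiv {X Y : Type} [TopologicalSpace X] [TopologicalSpace Y]
    (f : C(X, Y)) : Prop :=
  (Nonempty Y → Nonempty X) ∧ ∀ (x : X) (n : ℕ), Function.Bijective (piMap f (Fin n) x)

/-- `X` is a homotopy retract of `Y`. -/
def HomotopyRetract (X Y : Type) [TopologicalSpace X] [TopologicalSpace Y] : Prop :=
  ∃ (i : C(X, Y)) (r : C(Y, X)), (r.comp i).Homotopic (ContinuousMap.id X)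

/-- The underlying map of a homotopy equivalence. -/
def IsHEquivMap {X Y : Type} [TopologicalSpace X] [TopologicalSpace Y] (f : C(X, Y)) : Prop :=
  ∃ g : C(Y, X), (g.comp f).Homotopic (ContinuousMap.id X) ∧
    (f.comp g).Homotopic (ContinuousMap.id Y)

/-- The homotopy fibre of `f` over `b`. -/
def HFiber {E B : Type} [TopologicalSpace E] [TopologicalSpace B] (f : C(E, B)) (b : B) : Type :=
  { z : E × C(unitInterval, B) // z.2 0 = f z.1 ∧ z.2 1 = b }

instance {E B : Type} [TopologicalSpace E] [TopologicalSpace B] (f : C(E, B)) (b : B) :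
    TopologicalSpace (HFiber f b) :=
  instTopologicalSpaceSubtype

/-- The projection from the homotopy fibre to the total space. -/
def HFiber.proj {E B : Type} [TopologicalSpace E] [TopologicalSpace B] (f : C(E, B)) (b : B) :
    C(HFiber f b, E) :=
  ⟨fun z => z.1.1, by fun_prop⟩

/-- Comparison map from `F` to the homotopy fibre of `p`, given a null-homotopy of `p ∘ i`. -/
def hfibCompare {F E B : Type} [TopologicalSpace F] [TopologicalSpace E] [TopologicalSpace B]
    (i : C(F, E)) (p : C(E, B)) (b : B)
    (H : ContinuousMap.Homotopy (p.comp i) (ContinuousMap.const F b)) : C(F, HFiber p b) where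
  toFun z := ⟨(i z, (H.toContinuousMap.comp ContinuousMap.prodSwap).curry z),
    by simp, by simp⟩
  continuous_toFun := by
    apply Continuous.subtype_mk
    exact i.continuous.prodMk ((H.toContinuousMap.comp ContinuousMap.prodSwap).curry).continuous

/-- A sequence `F → E → B` is a homotopy fibration if `p ∘ i` is null-homotopic via a homotopy
for which the induced comparison map from `F` to the homotopy fibre of `p` is a homotopy
equivalence. -/
def IsHomotopyFibration {F E B : Type} [TopologicalSpace F] [TopologicalSpace E]
    [TopologicalSpace B] (i : C(F, E)) (p : C(E, B)) : Prop :=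
  ∃ (b : B) (H : ContinuousMap.Homotopy (p.comp i) (ContinuousMap.const F b)),
    IsHEquivMap (hfibCompare i p b H)


open CategoryTheory


/-- The singular chain complex functor with coefficients in a commutative ring `R`. -/
def singularChains (R : Type) [CommRing R] : TopCat.{0} ⥤ ChainComplex (ModuleCat.{0} R) ℕ :=
  TopCat.toSSet ⋙ ((SimplicialObject.whiskering _ _).obj (ModuleCat.free R)) ⋙
    AlgebraicTopology.alternatingFaceMapComplex _

/-- Singular homology of a space with coefficients in `R`. -/
def SH (R : Type) [CommRing R] (n : ℕ) (X : Type) [TopologicalSpace X] : ModuleCat R :=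
  ((singularChains R).obj (TopCat.of X)).homology n

/-- The induced map on singular homology. -/
def SHmap (R : Type) [CommRing R] (n : ℕ) {X Y : Type} [TopologicalSpace X] [TopologicalSpace Y]
    (f : C(X, Y)) : SH R n X ⟶ SH R n Y :=
  HomologicalComplex.homologyMap ((singularChains R).map (TopCat.ofHom f)) n

/-- An abelian group is a finitely generated `R`-module (for some compatible `R`-module
structure). -/
def IsFGModuleOver (R : Type) [CommRing R] (M : Type) [AddCommGroup M] : Prop :=
  ∃ (N : Type) (_ : AddCommGroup N) (_ : Module R N),
    Module.Finite R N ∧ Nonempty (M ≃+ N)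

/-- A (multiplicative) group is, up to isomorphism, a finitely generated `R`-module. -/
def IsFGMulOver (R : Type) [CommRing R] (G : Type) [Group G] : Prop :=
  ∃ (N : Type) (_ : AddCommGroup N) (_ : Module R N),
    Module.Finite R N ∧ Nonempty (G ≃* Multiplicative N)

/-- A space has finite type over `R`: each reduced integral homology group is a finitely
generated `R`-module.  (For connected spaces and `R = ℤ` this is the usual notion of
finite type.) -/
def FiniteTypeOver (R : Type) [CommRing R] (X : Type) [TopologicalSpace X] : Prop :=
  ∀ n : ℕ, 1 ≤ n → IsFGModuleOver R (SH ℤ n X)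

/-- The ideal `(p) ⊆ ℤ`. -/
def pIdeal (p : ℕ) : Ideal ℤ := Ideal.span {(p : ℤ)}

instance pIdeal.isPrime (p : ℕ) [hp : Fact p.Prime] : (pIdeal p).IsPrime := by
  rw [pIdeal, Ideal.span_singleton_prime (by exact_mod_cast hp.out.ne_zero)]
  exact_mod_cast Nat.prime_iff_prime_int.mp hp.out

/-- The integers localized at the prime `p`. -/
abbrev Zloc (p : ℕ) [Fact p.Prime] : Type := Localization.AtPrime (pIdeal p)

/-- A nonempty path-connected space all of whose homology with coefficients in `R` vanishes
in positive degrees, i.e. whose reduced `R`-homology vanishes. -/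
def AcyclicOver (R : Type) [CommRing R] (X : Type) [TopologicalSpace X] : Prop :=
  Nonempty X ∧ PathConnectedSpace X ∧ ∀ n : ℕ, 1 ≤ n → Subsingleton (SH R n X)

/-- An acyclic space: reduced integral homology vanishes. -/
def AcyclicSpace (X : Type) [TopologicalSpace X] : Prop := AcyclicOver ℤ X

/-- A homology rational sphere: a connected space with `H̃⋆(X;ℤ) ≅ ℚ`, concentrated in a
single (positive) degree. -/
def IsHomologyRationalSphere (X : Type) [TopologicalSpace X] : Prop :=
  Nonempty X ∧ PathConnectedSpace X ∧ ∃ d : ℕ, 1 ≤ d ∧ Nonempty ((SH ℤ d X) ≃+ ℚ) ∧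
    ∀ n : ℕ, 1 ≤ n → n ≠ d → Subsingleton (SH ℤ n X)



/-! ### Local spaces, GEMs and generalised Postnikov towers -/

/-- `S`-local space: the `k`-th power map on all homotopy groups is bijective
for every `k` with `S k`. -/
def SLocalSpace (S : ℕ → Prop) (X : Type) [TopologicalSpace X] : Prop :=
  ∀ (x : X) (n k : ℕ), S k →
    Function.Bijective (fun g : HomotopyGroup (Fin (n + 1)) X x => g ^ k)

/-- The family of exponents inverted in `p`-local spaces. -/
def pInv (p : ℕ) : ℕ → Prop := fun k => k ≠ 0 ∧ ¬ (p ∣ k)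

/-- The family of exponents inverted in rational spaces. -/
def ratInv : ℕ → Prop := fun k => k ≠ 0

/-- No exponents inverted (integral setting). -/
def intInv : ℕ → Prop := fun _ => False

/-- Homotopy groups are finitely generated `R`-modules in every degree. -/
def PiFiniteOver (R : Type) [CommRing R] (X : Type) [TopologicalSpace X] : Prop :=
  ∀ (x : X) (n : ℕ), IsFGMulOver R (HomotopyGroup (Fin (n + 1)) X x)

/-- An Eilenberg-MacLane space `K(A, n+1)` for some abelian group `A`. -/
def IsEMSpace (Y : Type) [TopologicalSpace Y] (n : ℕ) : Prop :=
  Nonempty Y ∧ PathConnectedSpace Y ∧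
    (∀ (y : Y) (k : ℕ), k ≠ n + 1 → Subsingleton (HomotopyGroup (Fin k) Y y)) ∧
    (∀ (y : Y) (a b : HomotopyGroup (Fin (n + 1)) Y y), a * b = b * a)

/-- A generalised Eilenberg-MacLane space (GEM): a space homotopy equivalent to a (possibly
infinite) product of Eilenberg-MacLane spaces of abelian groups. -/
def IsGEM (Z : Type) [TopologicalSpace Z] : Prop :=
  ∃ (ι : Type) (Y : ι → Type) (_ : ∀ i, TopologicalSpace (Y i)) (n : ι → ℕ),
    (∀ i, IsEMSpace (Y i) (n i)) ∧ Nonempty (ContinuousMap.HomotopyEquiv Z (∀ i, Y i))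

/-- One step of a generalised Postnikov tower: `q : Z' → Z` is, up to homotopy, the fibre
inclusion of a homotopy fibration `Z' → Z → K` with `K` a `c`-connected GEM which is `S`-local,
and of finite type over `R` when `ft = true`. -/
def GPTStep (R : Type) [CommRing R] (S : ℕ → Prop) (ft : Bool) (c : ℕ)
    {Z' Z : Type} [TopologicalSpace Z'] [TopologicalSpace Z] (q : C(Z', Z)) : Prop :=
  ∃ (K : Type) (_ : TopologicalSpace K) (k : C(Z, K)),
    IsGEM K ∧ (∀ (y : K) (j : ℕ), j ≤ c → Subsingleton (HomotopyGroup (Fin j) K y)) ∧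
    SLocalSpace S K ∧ (ft = true → PiFiniteOver R K) ∧ IsHomotopyFibration q k

/-- `X` admits a generalised Postnikov tower of length `l` whose principal fibrations have as
fibres `c`-connected GEMs which are `S`-local, and of finite type over `R` when `ft = true`.
(`c = 1` gives the usual simply-connected GEM condition.) -/
def HasGPT (R : Type) [CommRing R] (S : ℕ → Prop) (ft : Bool) (c : ℕ)
    (X : Type) [TopologicalSpace X] (l : ℕ) : Prop :=
  ∃ (Z : ℕ → Type) (_ : ∀ n, TopologicalSpace (Z n)) (q : ∀ n, C(Z (n + 1), Z n)),
    WeaklyContractible (Z 0) ∧ (∀ n < l, GPTStep R S ft c (q n)) ∧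
    ∃ f : C(X, Z l), IsWeakHomotopyEquiv f

/-- A universal cover: a covering map with simply connected total space. -/
def IsUniversalCover {X' X : Type} [TopologicalSpace X'] [TopologicalSpace X]
    (q : C(X', X)) : Prop :=
  IsCoveringMap (q : X' → X) ∧ SimplyConnectedSpace X'

/-! ### The classes `P`, `F`, `K` and their local analogues -/

/-- The class `P` (in its `(R, S, loc)`-parametrised form): the minimal class, closed under
homotopy retracts, of connected spaces (`S`-local and of finite type over `R` when
`loc = true`) whose universal covers admit finite type (over `R`) `S`-local generalised
Postnikov towers of finite length. -/
def ClassPGen (R : Type) [CommRing R] (S : ℕ → Prop) (loc : Bool)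
    (X : Type) [TopologicalSpace X] : Prop :=
  ConnectedSpace X ∧ (loc = true → SLocalSpace S X ∧ FiniteTypeOver R X) ∧
  ∃ (Y : Type) (_ : TopologicalSpace Y), ConnectedSpace Y ∧
    (loc = true → SLocalSpace S Y ∧ FiniteTypeOver R Y) ∧
    (∃ (Y' : Type) (_ : TopologicalSpace Y') (c : C(Y', Y)), IsUniversalCover c ∧
      ∃ l : ℕ, HasGPT R S true 1 Y' l) ∧
    HomotopyRetract X Y

/-- The class `𝐏` of the paper. -/
def ClassP (X : Type) [TopologicalSpace X] : Prop := ClassPGen ℤ intInv false X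

/-- The class `𝐏ₚ` of the paper. -/
def ClassPp (p : ℕ) [Fact p.Prime] (X : Type) [TopologicalSpace X] : Prop :=
  ClassPGen (Zloc p) (pInv p) true X

/-- The class `𝐏₀` of the paper. -/
def ClassP0 (X : Type) [TopologicalSpace X] : Prop := ClassPGen ℚ ratInv true X

/-- The class `F` (parametrised): connected spaces whose universal covers are of finite type
(over `R`) and have non-trivial homotopy groups in only finitely many dimensions. -/
def ClassFGen (R : Type) [CommRing R] (S : ℕ → Prop) (loc : Bool)
    (X : Type) [TopologicalSpace X] : Prop :=
  ConnectedSpace X ∧ (loc = true → SLocalSpace S X ∧ FiniteTypeOver R X) ∧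
  ∃ (X' : Type) (_ : TopologicalSpace X') (c : C(X', X)), IsUniversalCover c ∧
    FiniteTypeOver R X' ∧ (loc = true → SLocalSpace S X') ∧
    ∃ N : ℕ, ∀ n ≥ N, ∀ x' : X', Subsingleton (HomotopyGroup (Fin (n + 1)) X' x')

/-- The class `𝐅` of the paper. -/
def ClassF (X : Type) [TopologicalSpace X] : Prop := ClassFGen ℤ intInv false X

/-- The class `𝐅ₚ` of the paper. -/
def ClassFp (p : ℕ) [Fact p.Prime] (X : Type) [TopologicalSpace X] : Prop :=
  ClassFGen (Zloc p) (pInv p) true X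

/-- The class `𝐅₀` of the paper. -/
def ClassF0 (X : Type) [TopologicalSpace X] : Prop := ClassFGen ℚ ratInv true X

/-- `X` admits a classical Postnikov tower (consisting of stages `P n`, comparison maps
`f n : X → P n`, structure maps `q n : P (n+1) → P n` and `k`-invariants
`k n : P n → L n` with `L n` an Eilenberg-MacLane space of dimension `n + 2`) in which all but
finitely many of the `k`-invariants are trivial (null-homotopic). -/
def HasFinitelyManyKInvariants (X : Type) [TopologicalSpace X] : Prop :=
  ∃ (P : ℕ → Type) (_ : ∀ n, TopologicalSpace (P n))
    (f : ∀ n, C(X, P n)) (q : ∀ n, C(P (n + 1), P n))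
    (L : ℕ → Type) (_ : ∀ n, TopologicalSpace (L n)) (k : ∀ n, C(P n, L n)),
    WeaklyContractible (P 0) ∧
    (∀ n, (f n).Homotopic ((q n).comp (f (n + 1)))) ∧
    (∀ (n : ℕ) (x : X) (j : ℕ), j ≤ n → Function.Bijective (piMap (f n) (Fin j) x)) ∧
    (∀ (n : ℕ) (y : P n) (j : ℕ), j > n → Subsingleton (HomotopyGroup (Fin j) (P n) y)) ∧
    (∀ n, IsEMSpace (L n) (n + 1)) ∧
    (∀ n, IsHomotopyFibration (q n) (k n)) ∧
    Set.Finite {n : ℕ | ¬ ∃ y : L n, (k n).Homotopic (ContinuousMap.const (P n) y)}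

/-- The class `K` (parametrised): connected spaces whose universal covers are of finite type
(over `R`) and have only finitely many non-trivial `k`-invariants. -/
def ClassKGen (R : Type) [CommRing R] (S : ℕ → Prop) (loc : Bool)
    (X : Type) [TopologicalSpace X] : Prop :=
  ConnectedSpace X ∧ (loc = true → SLocalSpace S X ∧ FiniteTypeOver R X) ∧
  ∃ (X' : Type) (_ : TopologicalSpace X') (c : C(X', X)), IsUniversalCover c ∧
    FiniteTypeOver R X' ∧ (loc = true → SLocalSpace S X') ∧
    HasFinitelyManyKInvariants X'

/-- The class `𝐊` of the paper. -/
def ClassK (X : Type) [TopologicalSpace X] : Prop := ClassKGen ℤ intInv false X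

/-- The class `𝐊ₚ` of the paper. -/
def ClassKp (p : ℕ) [Fact p.Prime] (X : Type) [TopologicalSpace X] : Prop :=
  ClassKGen (Zloc p) (pInv p) true X

/-- The class `𝐊₀` of the paper. -/
def ClassK0 (X : Type) [TopologicalSpace X] : Prop := ClassKGen ℚ ratInv true X

/-- The class `𝐄₀` of the paper: connected spaces whose universal cover is rational elliptic,
i.e. a rational space with finite dimensional rational homotopy and rational homology. -/
def ClassE0 (X : Type) [TopologicalSpace X] : Prop :=
  ConnectedSpace X ∧
  ∃ (X' : Type) (_ : TopologicalSpace X') (c : C(X', X)), IsUniversalCover c ∧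
    SLocalSpace ratInv X' ∧
    (∀ (x' : X') (n : ℕ), IsFGMulOver ℚ (HomotopyGroup (Fin (n + 1)) X' x')) ∧
    (∃ N : ℕ, ∀ n ≥ N, ∀ x' : X', Subsingleton (HomotopyGroup (Fin (n + 1)) X' x')) ∧
    (∀ n : ℕ, 1 ≤ n → IsFGModuleOver ℚ (SH ℚ n X')) ∧
    (∃ N : ℕ, ∀ n ≥ N, Subsingleton (SH ℚ n X'))

/-! ### Asphericity and connectivity -/

/-- An aspherical (`K(π,1)`) space. -/
def IsAspherical (X : Type) [TopologicalSpace X] : Prop :=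
  Nonempty X ∧ PathConnectedSpace X ∧
    ∀ (x : X) (n : ℕ), 2 ≤ n → Subsingleton (HomotopyGroup (Fin n) X x)

/-- `X` is a `K(G, 1)`. -/
def IsKpi1Of (X : Type) [TopologicalSpace X] (G : Type) [Group G] : Prop :=
  IsAspherical X ∧ ∃ x : X, Nonempty (FundamentalGroup X x ≃* G)

/-- An `r`-connected space: homotopy groups vanish in degrees `≤ r`. -/
def IsNConnected (r : ℕ) (X : Type) [TopologicalSpace X] : Prop :=
  Nonempty X ∧ ∀ (x : X) (k : ℕ), k ≤ r → Subsingleton (HomotopyGroup (Fin k) X x)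


/-! ### Cones, suspensions, smash products and pushouts -/

/-- The (unreduced) cone on `X`: `X × I` with `X × {1}` collapsed to a point. -/
def TopCone (X : Type) [TopologicalSpace X] : Type :=
  Quot (fun a b : X × unitInterval => a.2 = 1 ∧ b.2 = 1)

instance (X : Type) [TopologicalSpace X] : TopologicalSpace (TopCone X) :=
  inferInstanceAs (TopologicalSpace (Quot _))

/-- The inclusion of `X` into the base of the cone. -/
def coneIncl (X : Type) [TopologicalSpace X] : C(X, TopCone X) :=
  ⟨fun x => Quot.mk _ (x, 0), continuous_quot_mk.comp (by fun_prop)⟩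

/-- The map of cones induced by a continuous map. -/
def coneMap {X Y : Type} [TopologicalSpace X] [TopologicalSpace Y] (f : C(X, Y)) :
    C(TopCone X, TopCone Y) :=
  ⟨Quot.lift (fun a => Quot.mk _ (f a.1, a.2))
      (fun _ _ h => Quot.sound ⟨h.1, h.2⟩),
    continuous_quot_lift _ (continuous_quot_mk.comp (by fun_prop))⟩

theorem coneMap_mapsTo {X Y : Type} [TopologicalSpace X] [TopologicalSpace Y] (f : C(X, Y)) :
    Set.MapsTo (coneMap f) (Set.range (coneIncl X)) (Set.range (coneIncl Y)) := by
  rintro _ ⟨x, rfl⟩; exact ⟨f x, rfl⟩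

/-- The reduced suspension of a pointed space: `X × I` with `X × {0} ∪ X × {1} ∪ {x₀} × I`
collapsed to a point. -/
def RSusp (X : Type) [TopologicalSpace X] (x0 : X) : Type :=
  Quot (fun a b : X × unitInterval =>
    (a.2 = 0 ∨ a.2 = 1 ∨ a.1 = x0) ∧ (b.2 = 0 ∨ b.2 = 1 ∨ b.1 = x0))

instance (X : Type) [TopologicalSpace X] (x0 : X) : TopologicalSpace (RSusp X x0) :=
  inferInstanceAs (TopologicalSpace (Quot _))

/-- The basepoint of the reduced suspension. -/
def RSusp.pt (X : Type) [TopologicalSpace X] (x0 : X) : RSusp X x0 :=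
  Quot.mk _ (x0, 0)

/-- The map of reduced suspensions induced by a pointed continuous map. -/
def rsuspMap {X Y : Type} [TopologicalSpace X] [TopologicalSpace Y] {x0 : X} {y0 : Y}
    (f : C(X, Y)) (hf : f x0 = y0) : C(RSusp X x0, RSusp Y y0) :=
  ⟨Quot.lift (fun a => Quot.mk _ (f a.1, a.2))
      (by
        rintro a b ⟨ha, hb⟩
        refine Quot.sound ⟨?_, ?_⟩ <;>
          [rcases ha with h | h | h; rcases hb with h | h | h] <;>
          simp [h, hf]),
    continuous_quot_lift _ (continuous_quot_mk.comp (by fun_prop))⟩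

/-- The half-smash `B ⋊ X = (B × X)/(B × {x₀})`. -/
def HalfSmash (B X : Type) [TopologicalSpace B] [TopologicalSpace X] (x0 : X) : Type :=
  Quot (fun u v : B × X => u.2 = x0 ∧ v.2 = x0)

instance (B X : Type) [TopologicalSpace B] [TopologicalSpace X] (x0 : X) :
    TopologicalSpace (HalfSmash B X x0) :=
  inferInstanceAs (TopologicalSpace (Quot _))

/-- The smash product `A ∧ X = (A × X)/(A × {x₀} ∪ {a₀} × X)`. -/
def Smash (A X : Type) [TopologicalSpace A] [TopologicalSpace X] (a0 : A) (x0 : X) : Type :=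
  Quot (fun u v : A × X => (u.1 = a0 ∨ u.2 = x0) ∧ (v.1 = a0 ∨ v.2 = x0))

instance (A X : Type) [TopologicalSpace A] [TopologicalSpace X] (a0 : A) (x0 : X) :
    TopologicalSpace (Smash A X a0 x0) :=
  inferInstanceAs (TopologicalSpace (Quot _))

/-- The basepoint of a smash product. -/
def Smash.pt {A X : Type} [TopologicalSpace A] [TopologicalSpace X] (a0 : A) (x0 : X) :
    Smash A X a0 x0 :=
  Quot.mk _ (a0, x0)

/-- The wedge `U ∨ V`. -/
def Wedge (U V : Type) [TopologicalSpace U] [TopologicalSpace V] (u0 : U) (v0 : V) : Type :=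
  Quot (fun s t : U ⊕ V => (s = Sum.inl u0 ∨ s = Sum.inr v0) ∧ (t = Sum.inl u0 ∨ t = Sum.inr v0))

instance (U V : Type) [TopologicalSpace U] [TopologicalSpace V] (u0 : U) (v0 : V) :
    TopologicalSpace (Wedge U V u0 v0) :=
  inferInstanceAs (TopologicalSpace (Quot _))

/-- The relation defining the pushout of `B ←f− A −g→ X`. -/
def PushoutRel {A B X : Type} (f : A → B) (g : A → X) (u v : B ⊕ X) : Prop :=
  ∃ a : A, u = Sum.inl (f a) ∧ v = Sum.inr (g a)

/-- The (strict) topological pushout of `B ←f− A −g→ X`. -/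
def TopPushout {A B X : Type} [TopologicalSpace A] [TopologicalSpace B] [TopologicalSpace X]
    (f : C(A, B)) (g : C(A, X)) : Type :=
  Quot (PushoutRel f g)

instance {A B X : Type} [TopologicalSpace A] [TopologicalSpace B] [TopologicalSpace X]
    (f : C(A, B)) (g : C(A, X)) : TopologicalSpace (TopPushout f g) :=
  inferInstanceAs (TopologicalSpace (Quot _))

/-! ### Simplicial complexes and polyhedral products -/

/-- An (abstract) simplicial complex on the vertex set `[m] = {0, …, m-1}`. -/
structure SimplicialComplexOn (m : ℕ) where
  faces : Set (Finset (Fin m))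
  empty_mem : ∅ ∈ faces
  down_closed : ∀ {σ τ : Finset (Fin m)}, σ ∈ faces → τ ⊆ σ → τ ∈ faces
  vertex_mem : ∀ i : Fin m, {i} ∈ faces

namespace SimplicialComplexOn

/-- `K` is the full simplex on its vertex set. -/
def IsSimplex {m : ℕ} (K : SimplicialComplexOn m) : Prop := K.faces = Set.univ

/-- A minimal non-face of `K`. -/
def IsMinNonFace {m : ℕ} (K : SimplicialComplexOn m) (M : Finset (Fin m)) : Prop :=
  2 ≤ M.card ∧ M ∉ K.faces ∧ ∀ τ : Finset (Fin m), τ ⊂ M → τ ∈ K.faces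

/-- A flag complex: all minimal non-faces have cardinality two. -/
def IsFlag {m : ℕ} (K : SimplicialComplexOn m) : Prop :=
  ∀ M : Finset (Fin m), K.IsMinNonFace M → M.card = 2

/-- The minimal non-faces are mutually disjoint. -/
def MinNonFacesDisjoint {m : ℕ} (K : SimplicialComplexOn m) : Prop :=
  ∀ M M' : Finset (Fin m), K.IsMinNonFace M → K.IsMinNonFace M' → M ≠ M' →
    Disjoint M M'

end SimplicialComplexOn

/-- The polyhedral product `Z_K(X, A)` of the family of pairs `(X i, A i)`, as a subset of
`∏ i, X i`. -/
def polyProd {m : ℕ} (K : SimplicialComplexOn m) (X : Fin m → Type)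
    [∀ i, TopologicalSpace (X i)] (A : ∀ i, Set (X i)) : Set (∀ i, X i) :=
  {z | ∃ σ ∈ K.faces, ∀ i, i ∉ σ → z i ∈ A i}

/-- The continuous inclusion of a subspace. -/
def inclCM {X : Type} [TopologicalSpace X] (A : Set X) : C(A, X) :=
  ⟨Subtype.val, continuous_subtype_val⟩

/-- The map of polyhedral products induced by a family of maps of pairs. -/
def polyProdMap {m : ℕ} (K : SimplicialComplexOn m) {X Y : Fin m → Type}
    [∀ i, TopologicalSpace (X i)] [∀ i, TopologicalSpace (Y i)]
    {A : ∀ i, Set (X i)} {B : ∀ i, Set (Y i)} (f : ∀ i, C(X i, Y i))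
    (hf : ∀ i, Set.MapsTo (f i) (A i) (B i)) :
    C(polyProd K X A, polyProd K Y B) :=
  have hmem : ∀ z : polyProd K X A, (fun i => f i (z.1 i)) ∈ polyProd K Y B := fun z => by
    obtain ⟨σ, hσ, hz⟩ := z.2
    exact ⟨σ, hσ, fun i hi => hf i (hz i hi)⟩
  ⟨fun z => ⟨fun i => f i (z.1 i), hmem z⟩,
    Continuous.subtype_mk (continuous_pi fun i =>
      (f i).continuous.comp ((continuous_apply i).comp continuous_subtype_val)) hmem⟩

/-- The inclusion of the polyhedral product into the ambient product. -/
def polyProdProj {m : ℕ} (K : SimplicialComplexOn m) (X : Fin m → Type)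
    [∀ i, TopologicalSpace (X i)] (A : ∀ i, Set (X i)) :
    C(polyProd K X A, ∀ i, X i) :=
  ⟨Subtype.val, continuous_subtype_val⟩

/-! ### Cofibrations -/

/-- A map is a cofibration when it has the homotopy extension property. -/
def IsCofibration {A X : Type} [TopologicalSpace A] [TopologicalSpace X] (j : C(A, X)) : Prop :=
  ∀ (Y : Type) (_ : TopologicalSpace Y) (g : C(X, Y)) (h : C(unitInterval × A, Y)),
    (∀ a, h (0, a) = g (j a)) →
    ∃ H : C(unitInterval × X, Y), (∀ x, H (0, x) = g x) ∧ ∀ t a, H (t, j a) = h (t, a)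

/-- `(X, A)` is an NDR-pair: the inclusion `A → X` is a cofibration. -/
def IsNDRPair {X : Type} [TopologicalSpace X] (A : Set X) : Prop :=
  IsCofibration (inclCM A)


/-! ### The evaluation map from the cone on a homotopy fibre -/

/-- The canonical evaluation map `C(hofib(A → X)) → X`, sending `((a, γ), t)` to `γ t`. -/
def coneFibEval {X : Type} [TopologicalSpace X] (A : Set X) (x0 : X) :
    C(TopCone (HFiber (inclCM A) x0), X) :=
  ⟨Quot.lift (fun w : HFiber (inclCM A) x0 × unitInterval => w.1.1.2 w.2)
      (fun w w' h => by
        rw [h.1, h.2, w.1.2.2, w'.1.2.2]),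
    continuous_quot_lift _ (by
      have h1 : Continuous fun w : HFiber (inclCM A) x0 × unitInterval =>
          ((w.1.1.2, w.2) : C(unitInterval, X) × unitInterval) :=
        ((continuous_snd.comp (continuous_subtype_val.comp continuous_fst)).prodMk
          continuous_snd)
      exact ContinuousEval.continuous_eval.comp h1)⟩

theorem coneFibEval_mapsTo {X : Type} [TopologicalSpace X] (A : Set X) (x0 : X) :
    Set.MapsTo (coneFibEval A x0) (Set.range (coneIncl (HFiber (inclCM A) x0))) A := by
  rintro _ ⟨w, rfl⟩
  show w.1.2 0 ∈ A
  rw [w.2.1]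
  exact w.1.1.2

/-! ### Lusternik-Schnirelmann category and localizations -/

/-- `cat X ≤ n`: `X` is covered by `n + 1` open sets, each of which is contractible in `X`. -/
def LSCatLE (X : Type) [TopologicalSpace X] (n : ℕ) : Prop :=
  ∃ U : Fin (n + 1) → Set X, (∀ i, IsOpen (U i)) ∧ (⋃ i, U i) = Set.univ ∧
    ∀ i, ∃ x0 : X, (inclCM (U i)).Homotopic (ContinuousMap.const _ x0)

/-- `f : X → Y` is an `S`-localization (with coefficients `R`): `Y` is `S`-local and `f`
induces an isomorphism on homology with coefficients in `R`. -/
def IsLocalizationOver (R : Type) [CommRing R] (S : ℕ → Prop) {X Y : Type}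
    [TopologicalSpace X] [TopologicalSpace Y] (f : C(X, Y)) : Prop :=
  SLocalSpace S Y ∧ ∀ n : ℕ, Function.Bijective (SHmap R n f)

/-! ### The induced homomorphism on fundamental groups, and the plus construction -/

/-- The homomorphism induced by a continuous map on fundamental groups. -/
def pi1Hom {X Y : Type} [TopologicalSpace X] [TopologicalSpace Y] (f : C(X, Y)) (x : X) :
    FundamentalGroup X x →* FundamentalGroup Y (f x) :=
  CategoryTheory.Functor.mapEnd
    (X := FundamentalGroupoid.mk x)
    (FundamentalGroupoid.fundamentalGroupoidFunctor.map
      (TopCat.ofHom f))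

/-- `l : X → Y` is a Quillen plus construction with respect to the perfect normal subgroup
`P ≤ π₁(X, x)`: it kills exactly `P` on fundamental groups and its homotopy fibre is acyclic
(equivalently, it is a homology isomorphism for all local coefficient systems on `Y`). -/
def IsPlusConstructionWrt {X Y : Type} [TopologicalSpace X] [TopologicalSpace Y]
    (l : C(X, Y)) (x : X) (P : Subgroup (FundamentalGroup X x)) : Prop :=
  P.Normal ∧ ⁅P, P⁆ = P ∧
  Function.Surjective (pi1Hom l x) ∧ (pi1Hom l x).ker = P ∧
  AcyclicSpace (HFiber l (l x))

/-! ### Graph products of groups -/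

/-- The commutation relations defining a graph product. -/
def graphProdRels {m : ℕ} (Γ : SimpleGraph (Fin m)) (G : Fin m → Type)
    [∀ i, Group (G i)] : Set (Monoid.CoprodI G) :=
  {x | ∃ (i j : Fin m) (g : G i) (h : G j), Γ.Adj i j ∧
    x = Monoid.CoprodI.of g * Monoid.CoprodI.of h *
      (Monoid.CoprodI.of g)⁻¹ * (Monoid.CoprodI.of h)⁻¹}

/-- The graph product of the groups `G i` over the simple graph `Γ`. -/
def GraphProduct {m : ℕ} (Γ : SimpleGraph (Fin m)) (G : Fin m → Type)
    [∀ i, Group (G i)] : Type :=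
  Monoid.CoprodI G ⧸ Subgroup.normalClosure (graphProdRels Γ G)

instance {m : ℕ} (Γ : SimpleGraph (Fin m)) (G : Fin m → Type) [∀ i, Group (G i)] :
    Group (GraphProduct Γ G) :=
  inferInstanceAs (Group (Monoid.CoprodI G ⧸ Subgroup.normalClosure (graphProdRels Γ G)))

theorem graphProdRels_le_ker {m : ℕ} (Γ : SimpleGraph (Fin m)) (G : Fin m → Type)
    [∀ i, Group (G i)] :
    Subgroup.normalClosure (graphProdRels Γ G) ≤
      (Monoid.CoprodI.lift fun i => MonoidHom.mulSingle G i).ker := by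
  apply Subgroup.normalClosure_le_normal
  rintro x ⟨i, j, g, h, hadj, rfl⟩
  have hc : Commute (MonoidHom.mulSingle G i g) (MonoidHom.mulSingle G j h) :=
    Pi.mulSingle_commute hadj.ne g h
  simp only [SetLike.mem_coe, MonoidHom.mem_ker, map_mul, map_inv, Monoid.CoprodI.lift_of]
  rw [hc.eq]
  group

/-- The canonical homomorphism from the graph product to the direct product. -/
def GraphProduct.toPi {m : ℕ} (Γ : SimpleGraph (Fin m)) (G : Fin m → Type)
    [∀ i, Group (G i)] : GraphProduct Γ G →* ∀ i, G i :=
  QuotientGroup.lift _ (Monoid.CoprodI.lift fun i => MonoidHom.mulSingle G i)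
    (graphProdRels_le_ker Γ G)

/-- The graph product kernel `K_Γ(G)`: the kernel of the canonical homomorphism
`G^Γ → ∏ i, G i`. -/
def GraphProductKernel {m : ℕ} (Γ : SimpleGraph (Fin m)) (G : Fin m → Type)
    [∀ i, Group (G i)] : Subgroup (GraphProduct Γ G) :=
  (GraphProduct.toPi Γ G).ker

/-- The flag complex of a simple graph. -/
def flagComplex {m : ℕ} (Γ : SimpleGraph (Fin m)) : SimplicialComplexOn m where
  faces := {σ | ∀ i ∈ σ, ∀ j ∈ σ, i ≠ j → Γ.Adj i j}
  empty_mem := by simp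
  down_closed := fun hσ hτ i hi j hj hij => hσ i (hτ hi) j (hτ hj) hij
  vertex_mem := by
    intro i j hj k hk hjk
    simp only [Finset.mem_singleton] at hj hk
    exact absurd (hj.trans hk.symm) hjk


/-- A rational sphere `S^n_{(0)}` (`n ≥ 2`): a simply connected rational space whose reduced
integral homology is a single `ℚ` in degree `n`. -/
def IsRationalSphere (Y : Type) [TopologicalSpace Y] (n : ℕ) : Prop :=
  SimplyConnectedSpace Y ∧ SLocalSpace ratInv Y ∧ 2 ≤ n ∧
    Nonempty ((SH ℤ n Y) ≃+ ℚ) ∧ ∀ k : ℕ, 1 ≤ k → k ≠ n → Subsingleton (SH ℤ k Y)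

end

noncomputable section PolyFibAux
open unitInterval Set

namespace PolyFib

/-! ### Real-interval helpers -/

/-- Clamp a real number into the unit interval. -/
def pI (r : ℝ) : unitInterval := Set.projIcc 0 1 zero_le_one r

lemma continuous_pI : Continuous pI :=
  (continuous_projIcc : Continuous (Set.projIcc (0:ℝ) 1 zero_le_one))

@[simp] lemma pI_coe (x : unitInterval) : pI (x : ℝ) = x := by
  simp [pI]

lemma pI_of_mem {r : ℝ} (h : r ∈ Icc (0:ℝ) 1) : (pI r : ℝ) = r := by
  rw [pI, Set.projIcc_of_mem zero_le_one h]

@[simp] lemma pI_zero : pI 0 = 0 := by simp [pI]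

@[simp] lemma pI_one : pI 1 = 1 := by
  have : pI 1 = Set.projIcc (0:ℝ) 1 zero_le_one 1 := rfl
  rw [this, Set.projIcc_of_right_le zero_le_one le_rfl]; rfl

lemma pI_of_le_zero {r : ℝ} (h : r ≤ 0) : pI r = 0 := by
  rw [pI, Set.projIcc_of_le_left zero_le_one h]; rfl

lemma pI_of_one_le {r : ℝ} (h : 1 ≤ r) : pI r = 1 := by
  rw [pI, Set.projIcc_of_right_le zero_le_one h]; rfl

/-- Evaluation of a path at a real parameter (clamped). -/
def evR {X : Type} [TopologicalSpace X] (γ : C(unitInterval, X)) (r : ℝ) : X := γ (pI r)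

lemma continuous_evR {X : Type} [TopologicalSpace X] :
    Continuous (fun p : C(unitInterval, X) × ℝ => evR p.1 p.2) :=
  continuous_eval.comp (continuous_fst.prodMk (continuous_pI.comp continuous_snd))

lemma Continuous.evR' {X Z : Type} [TopologicalSpace X] [TopologicalSpace Z]
    {γ : Z → C(unitInterval, X)} {r : Z → ℝ} (hγ : Continuous γ) (hr : Continuous r) :
    Continuous (fun z => evR (γ z) (r z)) :=
  continuous_evR.comp (hγ.prodMk hr)

@[simp] lemma evR_coe {X : Type} [TopologicalSpace X] (γ : C(unitInterval, X))
    (x : unitInterval) : evR γ (x : ℝ) = γ x := by simp [evR]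

/-! ### Gluing continuous maps over two closed pieces -/

variable {Z W : Type} [TopologicalSpace Z] [TopologicalSpace W]

open Classical in
/-- Glue two continuous maps defined on closed subsets covering `Z`. -/
def glueCM {s t : Set Z} (f : C(s, W)) (g : C(t, W)) (hcov : ∀ z, z ∈ s ∨ z ∈ t) : Z → W :=
  fun z => if hz : z ∈ s then f ⟨z, hz⟩ else g ⟨z, (hcov z).resolve_left hz⟩

open Classical in
lemma glueCM_continuous {s t : Set Z} (hs : IsClosed s) (ht : IsClosed t)
    (f : C(s, W)) (g : C(t, W)) (hcov : ∀ z, z ∈ s ∨ z ∈ t)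
    (hag : ∀ z (hzs : z ∈ s) (hzt : z ∈ t), f ⟨z, hzs⟩ = g ⟨z, hzt⟩) :
    Continuous (glueCM f g hcov) := by
  rw [continuous_iff_isClosed]
  intro c hc
  have key : glueCM f g hcov ⁻¹' c =
      (Subtype.val '' (f ⁻¹' c)) ∪ (Subtype.val '' (g ⁻¹' c)) := by
    ext z
    simp only [Set.mem_preimage, Set.mem_union, Set.mem_image]
    constructor
    · intro hz
      by_cases hzs : z ∈ s
      · left; exact ⟨⟨z, hzs⟩, by simpa [glueCM, hzs] using hz, rfl⟩
      · right
        exact ⟨⟨z, (hcov z).resolve_left hzs⟩, by simpa [glueCM, hzs] using hz, rfl⟩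
    · rintro (⟨⟨z', hz'⟩, hmem, rfl⟩ | ⟨⟨z', hz'⟩, hmem, rfl⟩)
      · simpa [glueCM, hz'] using hmem
      · by_cases hzs : z' ∈ s
        · have := hag z' hzs hz'
          simpa [glueCM, hzs, this] using hmem
        · simpa [glueCM, hzs] using hmem
  rw [key]
  exact ((hs.isClosedEmbedding_subtypeVal.isClosedMap _ (hc.preimage f.continuous))).union
    (ht.isClosedEmbedding_subtypeVal.isClosedMap _ (hc.preimage g.continuous))

open Classical in
lemma glueCM_left {s t : Set Z} (f : C(s, W)) (g : C(t, W)) (hcov : ∀ z, z ∈ s ∨ z ∈ t)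
    {z : Z} (hz : z ∈ s) : glueCM f g hcov z = f ⟨z, hz⟩ := by simp [glueCM, hz]

open Classical in
lemma glueCM_right {s t : Set Z} (f : C(s, W)) (g : C(t, W)) (hcov : ∀ z, z ∈ s ∨ z ∈ t)
    (hag : ∀ z (hzs : z ∈ s) (hzt : z ∈ t), f ⟨z, hzs⟩ = g ⟨z, hzt⟩)
    {z : Z} (hz : z ∈ t) : glueCM f g hcov z = g ⟨z, hz⟩ := by
  by_cases hzs : z ∈ s
  · rw [glueCM_left f g hcov hzs]; exact hag z hzs hz
  · simp [glueCM, hzs]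

end PolyFib
end PolyFibAux
noncomputable section PolyFibAux2
open unitInterval Set

namespace PolyFib

variable {F Z : Type} [TopologicalSpace F] [TopologicalSpace Z]

/-! ### Cone helpers -/

/-- Points of the cone. -/
def coneMk (w : F) (t : unitInterval) : TopCone F := Quot.mk _ (w, t)

lemma coneMk_apex (w w' : F) (s t : unitInterval) (hs : s = 1) (ht : t = 1) :
    coneMk w s = coneMk w' t := Quot.sound ⟨hs, ht⟩

lemma continuous_coneMk : Continuous fun p : F × unitInterval => coneMk p.1 p.2 :=
  continuous_quot_mk

lemma coneIncl_eq (w : F) : coneIncl F w = coneMk w 0 := rfl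

lemma cone_ind {P : TopCone F → Prop} (h : ∀ w t, P (coneMk w t)) : ∀ x, P x := by
  intro x
  induction x using Quot.ind with
  | _ a => exact h a.1 a.2

/-- Descend a map on `F × I` to the cone. -/
def coneDesc (f : C(F × unitInterval, Z)) (hf : ∀ w w', f (w, 1) = f (w', 1)) :
    C(TopCone F, Z) :=
  ⟨Quot.lift (fun a => f a)
      (by rintro ⟨w, s⟩ ⟨w', t⟩ ⟨h1, h2⟩
          dsimp only at h1 h2; subst h1; subst h2; exact hf w w'),
    continuous_quot_lift _ f.continuous⟩

@[simp] lemma coneDesc_mk (f : C(F × unitInterval, Z)) (hf) (w : F) (t : unitInterval) :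
    coneDesc f hf (coneMk w t) = f (w, t) := rfl

/-- Descend a homotopy-type map on `(F × I) × I` to `TopCone F × I`. -/
def coneHomotopyMk (f : C((F × unitInterval) × unitInterval, Z))
    (hf : ∀ w w' u, f ((w, 1), u) = f ((w', 1), u)) :
    C(TopCone F × unitInterval, Z) :=
  ContinuousMap.uncurry
    (⟨Quot.lift (fun a => f.curry a)
        (by rintro ⟨w, s⟩ ⟨w', t⟩ ⟨h1, h2⟩
            dsimp only at h1 h2; subst h1; subst h2
            exact ContinuousMap.ext fun u => hf w w' u),
      continuous_quot_lift _ f.curry.continuous⟩ : C(TopCone F, C(unitInterval, Z)))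

@[simp] lemma coneHomotopyMk_mk (f : C((F × unitInterval) × unitInterval, Z)) (hf)
    (w : F) (t : unitInterval) (u : unitInterval) :
    coneHomotopyMk f hf (coneMk w t, u) = f ((w, t), u) := by
  simp [coneHomotopyMk, coneMk, ContinuousMap.uncurry_apply]
  rfl

/-- The cone coordinate. -/
def coneCoord : C(TopCone F, unitInterval) :=
  coneDesc ⟨fun a => a.2, continuous_snd⟩ (fun _ _ => rfl)

@[simp] lemma coneCoord_mk (w : F) (t : unitInterval) : coneCoord (coneMk w t) = t := rfl

lemma pI_affine_one (u : unitInterval) : pI ((1 : ℝ) + (u : ℝ) * (1 - (1 : ℝ))) = 1 := by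
  norm_num

/-- The squeeze of the cone towards the apex. -/
def coneSqueeze : C(TopCone F × unitInterval, TopCone F) :=
  coneHomotopyMk
    ⟨fun a => coneMk a.1.1 (pI ((a.1.2 : ℝ) + (a.2 : ℝ) * (1 - (a.1.2 : ℝ)))),
      continuous_coneMk.comp ((continuous_fst.comp continuous_fst).prodMk
        (continuous_pI.comp (by fun_prop)))⟩
    (by intro w w' u
        exact coneMk_apex _ _ _ _ (pI_affine_one u) (pI_affine_one u))

lemma coneSqueeze_mk (w : F) (t u : unitInterval) :
    coneSqueeze (coneMk w t, u) = coneMk w (pI ((t : ℝ) + (u : ℝ) * (1 - (t : ℝ)))) := by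
  simp [coneSqueeze]

@[simp] lemma coneSqueeze_zero (x : TopCone F) : coneSqueeze (x, 0) = x := by
  induction x using Quot.ind with
  | _ a =>
    show coneSqueeze (coneMk a.1 a.2, 0) = coneMk a.1 a.2
    rw [coneSqueeze_mk]
    norm_num

lemma coneSqueeze_one (x : TopCone F) (w : F) : coneSqueeze (x, 1) = coneMk w 1 := by
  induction x using Quot.ind with
  | _ a =>
    show coneSqueeze (coneMk a.1 a.2, 1) = coneMk w 1
    rw [coneSqueeze_mk]
    refine coneMk_apex _ _ _ _ ?_ rfl
    have : (a.2 : ℝ) + (1 : unitInterval) * (1 - (a.2:ℝ)) = 1 := by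
      push_cast; ring
    rw [this, pI_one]

/-! ### Data extracted from a cofibration -/

/-- Explicit retraction data for an NDR pair. -/
structure CofibData (X : Type) [TopologicalSpace X] (A : Set X) : Type where
  hom : C(unitInterval × X, X × unitInterval)
  mem : ∀ t x, (hom (t, x)).2 ≠ 0 → (hom (t, x)).1 ∈ A
  zero : ∀ x, hom (0, x) = (x, 0)
  eqA : ∀ t x, x ∈ A → hom (t, x) = (x, t)

lemma exists_cofibData {X : Type} [TopologicalSpace X] {A : Set X} (h : IsNDRPair A) :
    Nonempty (CofibData X A) := by
  classical
  set S : Set (X × unitInterval) := {q | q.2 = 0 ∨ q.1 ∈ A} with hS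
  have hg : Continuous fun x : X => (⟨(x, 0), Or.inl rfl⟩ : S) := by
    apply Continuous.subtype_mk
    exact continuous_id.prodMk continuous_const
  have hh : Continuous fun p : unitInterval × A => (⟨(p.2.1, p.1), Or.inr p.2.2⟩ : S) := by
    apply Continuous.subtype_mk
    exact (continuous_subtype_val.comp continuous_snd).prodMk continuous_fst
  obtain ⟨H, H0, HA⟩ := h S inferInstance ⟨_, hg⟩ ⟨_, hh⟩ (fun a => by
    apply Subtype.ext; rfl)
  refine ⟨⟨(⟨Subtype.val, continuous_subtype_val⟩ : C(S, X × unitInterval)).comp H, ?_, ?_, ?_⟩⟩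
  · intro t x hne
    have := (H (t, x)).2
    simp only [hS, Set.mem_setOf_eq] at this
    rcases this with h0 | hA
    · exact absurd h0 hne
    · exact hA
  · intro x
    have := H0 x
    simpa using congrArg Subtype.val this
  · intro t x hx
    have := HA t ⟨x, hx⟩
    exact congrArg Subtype.val this

end PolyFib
end PolyFibAux2
noncomputable section PolyFibAux3
open unitInterval Set

namespace PolyFib

section OnePair

variable {X : Type} [TopologicalSpace X] {A : Set X} {x0 : X}

/-- The space of paths ending at `x0`. -/
abbrev Pspace (X : Type) [TopologicalSpace X] (x0 : X) : Type :=
  {δ : C(unitInterval, X) // δ 1 = x0}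

/-- The homotopy fibre of `A → X` over `x0`. -/
abbrev Fb (A : Set X) (x0 : X) : Type := HFiber (inclCM A) x0

lemma Fb.path_zero (w : Fb A x0) : w.1.2 0 = (w.1.1 : X) := w.2.1

lemma Fb.path_one (w : Fb A x0) : w.1.2 1 = x0 := w.2.2

lemma Fb.path_zero_mem (w : Fb A x0) : w.1.2 0 ∈ A := by
  rw [Fb.path_zero]; exact w.1.1.2

/-- Construct an element of the homotopy fibre. -/
def mkFb (γ : C(unitInterval, X)) (h0 : γ 0 ∈ A) (h1 : γ 1 = x0) : Fb A x0 :=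
  ⟨(⟨γ 0, h0⟩, γ), rfl, h1⟩

variable (cd : CofibData X A)

/-- The deformation part of the NDR data. -/
def kf (x : X) (t : unitInterval) : X := (cd.hom (t, x)).1

/-- The parameter part of the NDR data (as a real number). -/
def tf (x : X) (t : unitInterval) : ℝ := ((cd.hom (t, x)).2 : ℝ)

lemma continuous_kf : Continuous fun p : X × unitInterval => kf cd p.1 p.2 :=
  (continuous_fst.comp cd.hom.continuous).comp (continuous_snd.prodMk continuous_fst)

lemma continuous_tf : Continuous fun p : X × unitInterval => tf cd p.1 p.2 :=
  continuous_subtype_val.comp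
    ((continuous_snd.comp cd.hom.continuous).comp (continuous_snd.prodMk continuous_fst))

lemma kf_zero (x : X) : kf cd x 0 = x := by
  simp only [kf, cd.zero x]

lemma kf_A {x : X} (hx : x ∈ A) (t : unitInterval) : kf cd x t = x := by
  simp only [kf, cd.eqA t x hx]

lemma tf_A {x : X} (hx : x ∈ A) (t : unitInterval) : tf cd x t = (t : ℝ) := by
  simp only [tf, cd.eqA t x hx]

lemma kf_mem {x : X} {t : unitInterval} (h : tf cd x t ≠ 0) : kf cd x t ∈ A := by
  apply cd.mem
  intro h0
  exact h (by simp [tf, h0])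

lemma tf_mem_Icc (x : X) (t : unitInterval) : tf cd x t ∈ Icc (0:ℝ) 1 :=
  ((cd.hom (t, x)).2).2

/-- `μ(δ) = τ(δ(0), 1)`. -/
def muv (δ : Pspace X x0) : ℝ := tf cd (δ.1 0) 1

lemma continuous_muv : Continuous (muv cd (x0 := x0)) :=
  (continuous_tf cd).comp
    ((continuous_eval.comp ((continuous_subtype_val).prodMk continuous_const)).prodMk
      continuous_const)

lemma muv_mem_Icc (δ : Pspace X x0) : muv cd δ ∈ Icc (0:ℝ) 1 := tf_mem_Icc cd _ _

lemma muv_of_mem {δ : Pspace X x0} (h : δ.1 0 ∈ A) : muv cd δ = 1 := by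
  rw [muv, tf_A cd h]; rfl

/-- The path `T_v(δ)`: run down the `k`-track at level `v`, then along `δ`. -/
def Tpath : C((Pspace X x0 × ℝ) × unitInterval, X) :=
  ⟨fun q => if ((q.2 : ℝ)) ≤ 1/2
      then kf cd (q.1.1.1 0) (pI (q.1.2 * (1 - 2*(q.2:ℝ))))
      else evR q.1.1.1 (2*(q.2:ℝ) - 1), by
    have hs : Continuous fun q : (Pspace X x0 × ℝ) × unitInterval => ((q.2 : ℝ)) :=
      continuous_subtype_val.comp continuous_snd
    have hδ : Continuous fun q : (Pspace X x0 × ℝ) × unitInterval =>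
        (q.1.1.1 : C(unitInterval, X)) :=
      continuous_subtype_val.comp (continuous_fst.comp continuous_fst)
    have hv : Continuous fun q : (Pspace X x0 × ℝ) × unitInterval => q.1.2 :=
      continuous_snd.comp continuous_fst
    apply Continuous.if_le
    · exact (continuous_kf cd).comp
        ((continuous_eval.comp (hδ.prodMk continuous_const)).prodMk
          (continuous_pI.comp (hv.mul (continuous_const.sub (continuous_const.mul hs)))))
    · exact Continuous.evR' hδ ((continuous_const.mul hs).sub continuous_const)
    · exact hs
    · exact continuous_const
    · intro q hq
      have h1 : q.1.2 * (1 - 2*(q.2:ℝ)) = 0 := by rw [hq]; ring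
      have h2 : 2*(q.2:ℝ) - 1 = 0 := by rw [hq]; ring
      rw [h1, h2, pI_zero, kf_zero]
      simp [evR]⟩

/-- Curried form of `Tpath`. -/
def Tc : C(Pspace X x0 × ℝ, C(unitInterval, X)) := (Tpath cd).curry

lemma Tc_apply (δ : Pspace X x0) (v : ℝ) (s : unitInterval) :
    Tc cd (δ, v) s = if ((s : ℝ)) ≤ 1/2
      then kf cd (δ.1 0) (pI (v * (1 - 2*(s:ℝ))))
      else evR δ.1 (2*(s:ℝ) - 1) := rfl

lemma Tc_left (δ : Pspace X x0) (v : ℝ) (s : unitInterval) (h : (s:ℝ) ≤ 1/2) :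
    Tc cd (δ, v) s = kf cd (δ.1 0) (pI (v * (1 - 2*(s:ℝ)))) := by
  rw [Tc_apply, if_pos h]

lemma Tc_right (δ : Pspace X x0) (v : ℝ) (s : unitInterval) (h : 1/2 ≤ (s:ℝ)) :
    Tc cd (δ, v) s = evR δ.1 (2*(s:ℝ) - 1) := by
  rcases eq_or_lt_of_le h with heq | hlt
  · rw [Tc_apply, if_pos heq.symm.le]
    have h1 : v * (1 - 2*(s:ℝ)) = 0 := by rw [← heq]; ring
    have h2 : 2*(s:ℝ) - 1 = 0 := by rw [← heq]; ring
    rw [h1, h2, pI_zero, kf_zero]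
    simp [evR]
  · rw [Tc_apply, if_neg (not_le.2 hlt)]

lemma Tc_zero (δ : Pspace X x0) (v : ℝ) : Tc cd (δ, v) 0 = kf cd (δ.1 0) (pI v) := by
  rw [Tc_left cd δ v 0 (by norm_num)]
  norm_num

lemma Tc_one (δ : Pspace X x0) (v : ℝ) : Tc cd (δ, v) 1 = x0 := by
  rw [Tc_right cd δ v 1 (by norm_num)]
  have : 2*((1:unitInterval):ℝ) - 1 = ((1 : unitInterval) : ℝ) := by norm_num
  rw [this, evR_coe]
  exact δ.2

/-- The canonical element of the homotopy fibre associated to `δ` with `μ(δ) ≠ 0`. -/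
def Felt (δ : Pspace X x0) (h : muv cd δ ≠ 0) : Fb A x0 :=
  mkFb (Tc cd (δ, 1)) (by rw [Tc_zero, pI_one]; exact kf_mem cd h) (Tc_one cd δ 1)

/-- The basepoint of the homotopy fibre. -/
def basePt (hx0 : x0 ∈ A) : Fb A x0 :=
  ⟨(⟨x0, hx0⟩, ContinuousMap.const _ x0), rfl, rfl⟩

/-- The apex of the cone on the homotopy fibre. -/
def apexPt (hx0 : x0 ∈ A) : TopCone (Fb A x0) := coneMk (basePt hx0) 1

end OnePair

end PolyFib
end PolyFibAux3
noncomputable section PolyFibAux4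
open unitInterval Set

namespace PolyFib

section OnePair2

variable {X : Type} [TopologicalSpace X] {A : Set X} {x0 : X} (cd : CofibData X A)

lemma continuous_mkFb {Z : Type} [TopologicalSpace Z] {γ : Z → C(unitInterval, X)}
    (hγ : Continuous γ) (h0 : ∀ z, γ z 0 ∈ A) (h1 : ∀ z, γ z 1 = x0) :
    Continuous fun z => mkFb (γ z) (h0 z) (h1 z) := by
  apply Continuous.subtype_mk
  apply Continuous.prodMk
  · apply Continuous.subtype_mk
    exact continuous_eval.comp (hγ.prodMk continuous_const)
  · exact hγ

lemma muv_ne_zero {δ : Pspace X x0} (h : 1/2 ≤ muv cd δ) : muv cd δ ≠ 0 :=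
  ne_of_gt (lt_of_lt_of_le (by norm_num) h)

/-- The first glued piece of `G`. -/
def GmapA : C({δ : Pspace X x0 | 1/2 ≤ muv cd δ}, TopCone (Fb A x0)) := by
  refine ⟨fun p => coneMk (Felt cd p.1 (muv_ne_zero cd p.2)) (pI (2 - 2*muv cd p.1)), ?_⟩
  have h1 : Continuous fun p : {δ : Pspace X x0 | 1/2 ≤ muv cd δ} =>
      Felt cd p.1 (muv_ne_zero cd p.2) :=
    continuous_mkFb
      ((Tc cd).continuous.comp (continuous_subtype_val.prodMk continuous_const)) _ _
  have h2 : Continuous fun p : {δ : Pspace X x0 | 1/2 ≤ muv cd δ} =>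
      pI (2 - 2*muv cd p.1) :=
    continuous_pI.comp
      (continuous_const.sub (continuous_const.mul
        ((continuous_muv cd).comp continuous_subtype_val)))
  exact continuous_coneMk.comp (h1.prodMk h2)

/-- The second glued piece of `G` (constant at the apex). -/
def GmapB (hx0 : x0 ∈ A) : C({δ : Pspace X x0 | muv cd δ ≤ 1/2}, TopCone (Fb A x0)) :=
  ⟨fun _ => apexPt hx0, continuous_const⟩

lemma Gmap_agree (hx0 : x0 ∈ A) : ∀ z (hzs : z ∈ {δ : Pspace X x0 | 1/2 ≤ muv cd δ})
    (hzt : z ∈ {δ : Pspace X x0 | muv cd δ ≤ 1/2}),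
    GmapA cd ⟨z, hzs⟩ = GmapB cd hx0 ⟨z, hzt⟩ := by
  intro z hz1 hz2
  have hμ : muv cd z = 1/2 := le_antisymm hz2 hz1
  show coneMk _ _ = coneMk _ _
  refine coneMk_apex _ _ _ _ ?_ rfl
  rw [hμ]
  norm_num

lemma Gcover : ∀ δ : Pspace X x0, δ ∈ {δ : Pspace X x0 | 1/2 ≤ muv cd δ} ∨
    δ ∈ {δ : Pspace X x0 | muv cd δ ≤ 1/2} :=
  fun δ => (le_total (1/2) (muv cd δ)).imp id id

/-- The map `G : P → CF`. -/
def Gmap (hx0 : x0 ∈ A) : C(Pspace X x0, TopCone (Fb A x0)) :=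
  ⟨glueCM (GmapA cd) (GmapB cd hx0) (Gcover cd),
    glueCM_continuous (isClosed_le continuous_const (continuous_muv cd))
      (isClosed_le (continuous_muv cd) continuous_const) _ _ _ (Gmap_agree cd hx0)⟩

lemma Gmap_left (hx0 : x0 ∈ A) {δ : Pspace X x0} (h : 1/2 ≤ muv cd δ) :
    Gmap cd hx0 δ = coneMk (Felt cd δ (muv_ne_zero cd h)) (pI (2 - 2*muv cd δ)) :=
  glueCM_left (GmapA cd) (GmapB cd hx0) (Gcover cd) h

lemma Gmap_right (hx0 : x0 ∈ A) {δ : Pspace X x0} (h : muv cd δ ≤ 1/2) :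
    Gmap cd hx0 δ = apexPt hx0 :=
  glueCM_right (GmapA cd) (GmapB cd hx0) (Gcover cd) (Gmap_agree cd hx0) h

lemma Gmap_of_mem (hx0 : x0 ∈ A) {δ : Pspace X x0} (h : δ.1 0 ∈ A) :
    Gmap cd hx0 δ ∈ Set.range (coneIncl (Fb A x0)) := by
  have hμ : muv cd δ = 1 := muv_of_mem cd h
  rw [Gmap_left cd hx0 (by rw [hμ]; norm_num)]
  refine ⟨Felt cd δ (muv_ne_zero cd (by rw [hμ]; norm_num)), ?_⟩
  rw [coneIncl_eq]
  congr 1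
  rw [hμ]
  norm_num

/-- Two-parameter evaluation used for the path-suffix map. -/
def suffCM : C((Fb A x0 × unitInterval) × unitInterval, X) :=
  ⟨fun q => evR q.1.1.1.2 ((q.1.2:ℝ) + (q.2:ℝ)*(1-(q.1.2:ℝ))), by
    apply Continuous.evR'
    · exact continuous_snd.comp (continuous_subtype_val.comp
        (continuous_fst.comp continuous_fst))
    · have h1 : Continuous fun q : (Fb A x0 × unitInterval) × unitInterval => ((q.1.2 : ℝ)) :=
        continuous_subtype_val.comp (continuous_snd.comp continuous_fst)
      have h2 : Continuous fun q : (Fb A x0 × unitInterval) × unitInterval => ((q.2 : ℝ)) :=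
        continuous_subtype_val.comp continuous_snd
      exact h1.add (h2.mul (continuous_const.sub h1))⟩

lemma suffCM_one (a : Fb A x0 × unitInterval) :
    (suffCM (A := A) (x0 := x0)).curry a 1 = x0 := by
  show evR a.1.1.2 ((a.2:ℝ) + ((1:unitInterval):ℝ)*(1-(a.2:ℝ))) = x0
  have h : (a.2:ℝ) + ((1:unitInterval):ℝ)*(1-(a.2:ℝ)) = 1 := by push_cast; ring
  simp only [h, evR, pI_one, Fb.path_one]

/-- The map from the cone on the fibre to the path space (partial-suffix paths). -/
def cpath : C(TopCone (Fb A x0), Pspace X x0) :=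
  coneDesc
    ⟨fun a => ⟨(suffCM (A := A) (x0 := x0)).curry a, suffCM_one a⟩,
      Continuous.subtype_mk (suffCM (A := A) (x0 := x0)).curry.continuous suffCM_one⟩
    (by
      intro w w'
      apply Subtype.ext
      apply ContinuousMap.ext
      intro t
      show evR w.1.2 (((1:unitInterval):ℝ) + (t:ℝ)*(1-((1:unitInterval):ℝ))) =
        evR w'.1.2 (((1:unitInterval):ℝ) + (t:ℝ)*(1-((1:unitInterval):ℝ)))
      have h : ((1:unitInterval):ℝ) + (t:ℝ)*(1-((1:unitInterval):ℝ)) = 1 := by push_cast; ring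
      simp only [h, evR, pI_one, Fb.path_one])

lemma cpath_mk_apply (w : Fb A x0) (s t : unitInterval) :
    (cpath (coneMk w s)).1 t = evR w.1.2 ((s:ℝ) + (t:ℝ)*(1-(s:ℝ))) := by
  simp only [cpath, coneDesc_mk]
  rfl

lemma cpath_mk_zero (w : Fb A x0) (t : unitInterval) :
    (cpath (coneMk w 0)).1 t = w.1.2 t := by
  rw [cpath_mk_apply]
  have h : ((0:unitInterval):ℝ) + (t:ℝ)*(1-((0:unitInterval):ℝ)) = (t : ℝ) := by push_cast; ring
  rw [h, evR_coe]

/-- The composite self-map `q = G ∘ c` of the cone. -/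
def qmap (hx0 : x0 ∈ A) : C(TopCone (Fb A x0), TopCone (Fb A x0)) :=
  (Gmap cd hx0).comp cpath

end OnePair2

end PolyFib
end PolyFibAux4
noncomputable section PolyFibAux5
open unitInterval Set

namespace PolyFib

section OnePair3

variable {X : Type} [TopologicalSpace X] {A : Set X} {x0 : X} (cd : CofibData X A)

/-- Schedule for the fibre-side homotopy. -/
def aD (δ : Pspace X x0) (u : ℝ) : ℝ := (1-u) * (min 1 (2 - 2*muv cd δ)) + u/2

lemma continuous_aD : Continuous fun p : Pspace X x0 × unitInterval =>
    aD cd p.1 ((p.2 : ℝ)) := by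
  have h1 : Continuous fun p : Pspace X x0 × unitInterval => ((p.2 : ℝ)) :=
    continuous_subtype_val.comp continuous_snd
  have h2 : Continuous fun p : Pspace X x0 × unitInterval => muv cd p.1 :=
    (continuous_muv cd).comp continuous_fst
  apply Continuous.add
  · exact (continuous_const.sub h1).mul (continuous_const.min
      (continuous_const.sub (continuous_const.mul h2)))
  · exact h1.div_const 2

/-- The fibre-side homotopy, coordinatewise. -/
def Dc : C((Pspace X x0 × unitInterval) × unitInterval, X) :=
  ⟨fun q => Tc cd (q.1.1, 1 - (q.1.2:ℝ))
      (pI (aD cd q.1.1 (q.1.2:ℝ) + (q.2:ℝ) * (1 - aD cd q.1.1 (q.1.2:ℝ)))), by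
    have h1 : Continuous fun q : (Pspace X x0 × unitInterval) × unitInterval =>
        aD cd q.1.1 ((q.1.2 : ℝ)) := (continuous_aD cd).comp continuous_fst
    have h2 : Continuous fun q : (Pspace X x0 × unitInterval) × unitInterval => ((q.2 : ℝ)) :=
      continuous_subtype_val.comp continuous_snd
    have h3 : Continuous fun q : (Pspace X x0 × unitInterval) × unitInterval =>
        Tc cd (q.1.1, 1 - (q.1.2:ℝ)) :=
      (Tc cd).continuous.comp ((continuous_fst.comp continuous_fst).prodMk
        (continuous_const.sub (continuous_subtype_val.comp (continuous_snd.comp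
          continuous_fst))))
    exact continuous_eval.comp (h3.prodMk
      (continuous_pI.comp (h1.add (h2.mul (continuous_const.sub h1)))))⟩

lemma Dc_apply (δ : Pspace X x0) (u s : unitInterval) :
    Dc cd ((δ, u), s) = Tc cd (δ, 1 - (u:ℝ))
      (pI (aD cd δ (u:ℝ) + (s:ℝ) * (1 - aD cd δ (u:ℝ)))) := rfl

lemma aD_mem (δ : Pspace X x0) {u : ℝ} (hu : u ∈ Icc (0:ℝ) 1) :
    aD cd δ u ∈ Icc (0:ℝ) 1 := by
  have hμ := muv_mem_Icc cd δ
  simp only [aD, mem_Icc] at *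
  constructor
  · have hmin : (0:ℝ) ≤ min 1 (2 - 2*muv cd δ) := le_min (by norm_num) (by linarith [hμ.2])
    nlinarith [hu.1, hu.2]
  · have hmin : min 1 (2 - 2*muv cd δ) ≤ 1 := min_le_left _ _
    nlinarith [hu.1, hu.2]

/-- At time `1`, the fibre-side homotopy is the identity. -/
lemma Dc_one (δ : Pspace X x0) (s : unitInterval) : Dc cd ((δ, 1), s) = δ.1 s := by
  rw [Dc_apply]
  have h1 : aD cd δ ((1:unitInterval):ℝ) = 1/2 := by
    show (1 - 1) * _ + 1/2 = 1/2; ring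
  rw [h1]
  have hpos : (pI (1/2 + (s:ℝ) * (1 - 1/2)) : ℝ) = 1/2 + (s:ℝ)/2 := by
    rw [pI_of_mem (by constructor <;> [linarith [s.2.1]; linarith [s.2.2]])]
    ring
  have h2 : (1:ℝ) - ((1:unitInterval):ℝ) = 0 := by norm_num
  rw [h2, Tc_right cd _ _ _ (by rw [hpos]; linarith [s.2.1])]
  rw [hpos]
  have : 2 * ((1:ℝ)/2 + (s:ℝ)/2) - 1 = (s:ℝ) := by ring
  rw [this, evR_coe]

/-- At path-parameter `1`, the fibre-side homotopy is constant at `x0`. -/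
lemma Dc_endpoint (δ : Pspace X x0) (u : unitInterval) : Dc cd ((δ, u), 1) = x0 := by
  rw [Dc_apply]
  have : aD cd δ (u:ℝ) + ((1:unitInterval):ℝ) * (1 - aD cd δ (u:ℝ)) = 1 := by
    push_cast; ring
  rw [this, pI_one]
  exact Tc_one cd δ _

/-- The fibre-side homotopy keeps starting points in `A`. -/
lemma Dc_start_mem {δ : Pspace X x0} (h : δ.1 0 ∈ A) (u : unitInterval) :
    Dc cd ((δ, u), 0) ∈ A := by
  rw [Dc_apply]
  have hμ : muv cd δ = 1 := muv_of_mem cd h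
  have h1 : aD cd δ (u:ℝ) = (u:ℝ)/2 := by
    rw [aD, hμ]; norm_num
  have h2 : aD cd δ (u:ℝ) + ((0:unitInterval):ℝ) * (1 - aD cd δ (u:ℝ)) = (u:ℝ)/2 := by
    rw [h1]; push_cast; ring
  rw [h2]
  have hmem : (u:ℝ)/2 ∈ Icc (0:ℝ) 1 := ⟨by linarith [u.2.1], by linarith [u.2.2]⟩
  rw [Tc_left cd _ _ _ (by rw [pI_of_mem hmem]; linarith [u.2.2])]
  rw [kf_A cd h]
  exact h

/-- At time `0`, the fibre-side homotopy agrees with `c ∘ G`. -/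
lemma Dc_zero (hx0 : x0 ∈ A) (δ : Pspace X x0) (s : unitInterval) :
    Dc cd ((δ, 0), s) = (cpath (Gmap cd hx0 δ)).1 s := by
  rw [Dc_apply]
  have h1 : (1:ℝ) - ((0:unitInterval):ℝ) = 1 := by norm_num
  have h2 : aD cd δ ((0:unitInterval):ℝ) = min 1 (2 - 2*muv cd δ) := by
    show (1 - 0) * _ + 0/2 = _; ring
  rw [h1, h2]
  rcases le_total (1/2 : ℝ) (muv cd δ) with hc | hc
  · -- the non-apex branch
    have hμ := muv_mem_Icc cd δ
    have hm : min 1 (2 - 2*muv cd δ) = 2 - 2*muv cd δ :=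
      min_eq_right (by linarith [hc])
    rw [Gmap_left cd hx0 hc, cpath_mk_apply]
    have hcoe : ((pI (2 - 2*muv cd δ) : unitInterval) : ℝ) = 2 - 2*muv cd δ :=
      pI_of_mem ⟨by linarith [hμ.2], by linarith [hc]⟩
    rw [hcoe, hm]
    rfl
  · -- the apex branch
    have hm : min 1 (2 - 2*muv cd δ) = 1 := min_eq_left (by linarith [hc])
    rw [hm, Gmap_right cd hx0 hc]
    have : (1:ℝ) + (s:ℝ) * (1 - 1) = 1 := by ring
    rw [this, pI_one, Tc_one]
    show x0 = (cpath (coneMk (basePt hx0) 1)).1 s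
    rw [cpath_mk_apply]
    have h3 : ((1:unitInterval):ℝ) + (s:ℝ)*(1-((1:unitInterval):ℝ)) = 1 := by push_cast; ring
    rw [h3, evR, pI_one, Fb.path_one]

end OnePair3

end PolyFib
end PolyFibAux5
noncomputable section PolyFibAux6
open unitInterval Set

namespace PolyFib

section OnePair4

variable {X : Type} [TopologicalSpace X] {A : Set X} {x0 : X} (cd : CofibData X A)

/-- Extensionality for elements of the homotopy fibre. -/
lemma Fb.ext {w w' : Fb A x0} (h : ∀ s, w.1.2 s = w'.1.2 s) : w = w' := by
  have hp : w.1.2 = w'.1.2 := ContinuousMap.ext h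
  apply Subtype.ext
  apply Prod.ext
  · apply Subtype.ext
    rw [← Fb.path_zero w, ← Fb.path_zero w', hp]
  · exact hp

/-- Reparametrisation paths used in the homotopy-extension step. -/
def RepPath : C((Fb A x0 × ℝ) × unitInterval, X) :=
  ⟨fun q => evR q.1.1.1.2
      ((2 - min 1 (max 0 q.1.2)) * (q.2:ℝ) - (1 - min 1 (max 0 q.1.2))), by
    have he : Continuous fun q : (Fb A x0 × ℝ) × unitInterval =>
        min 1 (max 0 q.1.2) :=
      continuous_const.min (continuous_const.max (continuous_snd.comp continuous_fst))
    have hs : Continuous fun q : (Fb A x0 × ℝ) × unitInterval => ((q.2 : ℝ)) :=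
      continuous_subtype_val.comp continuous_snd
    apply Continuous.evR'
    · exact continuous_snd.comp (continuous_subtype_val.comp
        (continuous_fst.comp continuous_fst))
    · exact ((continuous_const.sub he).mul hs).sub (continuous_const.sub he)⟩

lemma RepPath_le_one (e : ℝ) : min 1 (max 0 e) ≤ 1 := min_le_left _ _

lemma RepPath_nonneg (e : ℝ) : 0 ≤ min 1 (max 0 e) := le_min zero_le_one (le_max_left _ _)

lemma RepPath_zero (p : Fb A x0 × ℝ) : (RepPath (A := A) (x0 := x0)).curry p 0 = p.1.1.2 0 := by
  show evR p.1.1.2 _ = _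
  have h : (2 - min 1 (max 0 p.2)) * ((0:unitInterval):ℝ) - (1 - min 1 (max 0 p.2)) ≤ 0 := by
    have := RepPath_le_one p.2
    push_cast
    nlinarith
  rw [evR, pI_of_le_zero h]

lemma RepPath_one (p : Fb A x0 × ℝ) : (RepPath (A := A) (x0 := x0)).curry p 1 = x0 := by
  show evR p.1.1.2 _ = _
  have h : (2 - min 1 (max 0 p.2)) * ((1:unitInterval):ℝ) - (1 - min 1 (max 0 p.2)) = 1 := by
    push_cast; ring
  rw [h, evR, pI_one, Fb.path_one]

lemma RepPath_zero_mem (p : Fb A x0 × ℝ) : (RepPath (A := A) (x0 := x0)).curry p 0 ∈ A := by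
  rw [RepPath_zero]; exact Fb.path_zero_mem p.1

/-- Reparametrisation of fibre elements. -/
def RepFb : C(Fb A x0 × ℝ, Fb A x0) :=
  ⟨fun p => mkFb ((RepPath (A := A) (x0 := x0)).curry p) (RepPath_zero_mem p) (RepPath_one p),
    continuous_mkFb (RepPath (A := A) (x0 := x0)).curry.continuous RepPath_zero_mem
      RepPath_one⟩

lemma RepFb_path (w : Fb A x0) (e : ℝ) (s : unitInterval) :
    (RepFb (w, e)).1.2 s =
      evR w.1.2 ((2 - min 1 (max 0 e)) * (s:ℝ) - (1 - min 1 (max 0 e))) := rfl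

lemma RepFb_one (w : Fb A x0) : RepFb (w, 1) = w := by
  apply Fb.ext
  intro s
  rw [RepFb_path]
  have h1 : min 1 (max 0 (1:ℝ)) = 1 := by norm_num
  rw [h1]
  have h2 : (2 - (1:ℝ)) * (s:ℝ) - (1 - 1) = (s:ℝ) := by ring
  rw [h2, evR_coe]

/-- `q` sends base points of the cone to base points, explicitly. -/
lemma qmap_base (hx0 : x0 ∈ A) (w : Fb A x0) :
    qmap cd hx0 (coneMk w 0) = coneMk (RepFb (w, 0)) 0 := by
  show Gmap cd hx0 (cpath (coneMk w 0)) = _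
  set δ := cpath (A := A) (x0 := x0) (coneMk w 0) with hδ
  have hδ0 : δ.1 0 ∈ A := by
    rw [hδ, cpath_mk_zero]
    exact Fb.path_zero_mem w
  have hμ : muv cd δ = 1 := muv_of_mem cd hδ0
  rw [Gmap_left cd hx0 (by rw [hμ]; norm_num)]
  have hco : pI (2 - 2*muv cd δ) = 0 := by rw [hμ]; norm_num
  rw [hco]
  congr 1
  apply Fb.ext
  intro s
  show Tc cd (δ, 1) s = (RepFb (w, 0)).1.2 s
  rw [RepFb_path]
  have he : min 1 (max 0 (0:ℝ)) = 0 := by norm_num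
  rw [he]
  have harg : (2 - (0:ℝ)) * (s:ℝ) - (1 - 0) = 2*(s:ℝ) - 1 := by ring
  rw [harg]
  rcases le_total ((s:ℝ)) (1/2) with hs | hs
  · rw [Tc_left cd _ _ _ hs]
    have h0 : 2*(s:ℝ) - 1 ≤ 0 := by linarith
    rw [evR, pI_of_le_zero h0, kf_A cd hδ0, hδ, cpath_mk_zero]
  · rw [Tc_right cd _ _ _ hs]
    show evR δ.1 _ = _
    rw [evR, evR, hδ, cpath_mk_zero]

/-- Core of the homotopy-extension homotopy for `q`. -/
def HQcore (hx0 : x0 ∈ A) :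
    C((Fb A x0 × unitInterval) × unitInterval, TopCone (Fb A x0)) := by
  refine ⟨fun q => if ((q.2:ℝ)) ≤ 2*((q.1.2:ℝ))
    then qmap cd hx0 (coneMk q.1.1 (pI (1 - 2*(1-(q.1.2:ℝ))/(2-(q.2:ℝ)))))
    else coneMk (RepFb (q.1.1, (q.2:ℝ) - 2*((q.1.2:ℝ)))) 0, ?_⟩
  have hu : Continuous fun q : (Fb A x0 × unitInterval) × unitInterval => ((q.2 : ℝ)) :=
    continuous_subtype_val.comp continuous_snd
  have hθ : Continuous fun q : (Fb A x0 × unitInterval) × unitInterval => ((q.1.2 : ℝ)) :=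
    continuous_subtype_val.comp (continuous_snd.comp continuous_fst)
  have hw : Continuous fun q : (Fb A x0 × unitInterval) × unitInterval => q.1.1 :=
    continuous_fst.comp continuous_fst
  have hdenom : ∀ q : (Fb A x0 × unitInterval) × unitInterval, (2:ℝ) - (q.2:ℝ) ≠ 0 := by
    intro q hcon
    have h1 : (q.2:ℝ) ≤ 1 := q.2.2.2
    linarith
  have harith : Continuous fun q : (Fb A x0 × unitInterval) × unitInterval =>
      pI (1 - 2*(1-(q.1.2:ℝ))/(2-(q.2:ℝ))) :=
    continuous_pI.comp (continuous_const.sub (Continuous.div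
      (continuous_const.mul (continuous_const.sub hθ)) (continuous_const.sub hu) hdenom))
  apply Continuous.if_le
  · exact (qmap cd hx0).continuous.comp (continuous_coneMk.comp (hw.prodMk harith))
  · exact continuous_coneMk.comp
      (((RepFb (A := A) (x0 := x0)).continuous.comp
        (hw.prodMk (hu.sub (continuous_const.mul hθ)))).prodMk continuous_const)
  · exact hu
  · exact continuous_const.mul hθ
  · intro q hq
    have hu1 : (q.2:ℝ) ≤ 1 := q.2.2.2
    have hθle : (q.1.2:ℝ) ≤ 1/2 := by linarith [hq ▸ hu1]
    have hden : (2:ℝ) - 2*(q.1.2:ℝ) ≠ 0 := by linarith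
    have harg : 1 - 2*(1-(q.1.2:ℝ))/(2-(q.2:ℝ)) = 0 := by
      rw [hq]
      have hden2 : (2:ℝ) - 2*(q.1.2:ℝ) ≠ 0 := by linarith
      rw [show (2:ℝ)*(1-(q.1.2:ℝ)) = 2 - 2*(q.1.2:ℝ) by ring, div_self hden2]
      ring
    rw [harg, pI_zero, qmap_base cd hx0]
    have he : (q.2:ℝ) - 2*((q.1.2:ℝ)) = 0 := by rw [hq]; ring
    rw [he]

/-- The homotopy-extension homotopy for `q`. -/
def HQ (hx0 : x0 ∈ A) : C(TopCone (Fb A x0) × unitInterval, TopCone (Fb A x0)) := by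
  refine coneHomotopyMk (HQcore cd hx0) ?_
  intro w w' u
  show (if _ then _ else _) = (if _ then _ else _)
  have h2 : ((u:ℝ)) ≤ 2*(((1:unitInterval):ℝ)) := by
    have := u.2.2; push_cast; linarith
  rw [if_pos h2, if_pos h2]
  have harg : 1 - 2*(1-((1:unitInterval):ℝ))/(2-(u:ℝ)) = 1 := by
    have hne : (2:ℝ) - (u:ℝ) ≠ 0 := by
      have h1 : (u:ℝ) ≤ 1 := u.2.2
      intro hcon; linarith
    push_cast
    field_simp
    ring
  rw [harg, pI_one]
  exact congrArg _ (coneMk_apex _ _ _ _ rfl rfl)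

lemma HQ_mk (hx0 : x0 ∈ A) (w : Fb A x0) (θ u : unitInterval) :
    HQ cd hx0 (coneMk w θ, u) = HQcore cd hx0 ((w, θ), u) := by
  simp only [HQ, coneHomotopyMk_mk]

lemma HQ_zero (hx0 : x0 ∈ A) (x : TopCone (Fb A x0)) :
    HQ cd hx0 (x, 0) = qmap cd hx0 x := by
  induction x using cone_ind with
  | h w θ =>
    rw [HQ_mk]
    show (if _ then _ else _) = _
    have hpos : ((0:unitInterval):ℝ) ≤ 2*((θ:ℝ)) := by
      have := θ.2.1; push_cast; linarith
    rw [if_pos hpos]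
    have harg : 1 - 2*(1-(θ:ℝ))/(2-((0:unitInterval):ℝ)) = (θ:ℝ) := by
      push_cast
      field_simp
      ring
    rw [harg, pI_coe]

lemma HQ_base (hx0 : x0 ∈ A) (w : Fb A x0) (u : unitInterval) :
    HQ cd hx0 (coneMk w 0, u) ∈ Set.range (coneIncl (Fb A x0)) := by
  rw [HQ_mk]
  show (if _ then _ else _) ∈ _
  rcases le_or_gt ((u:ℝ)) (2*(((0:unitInterval):ℝ))) with h | h
  · rw [if_pos h]
    have hu0 : (u:ℝ) = 0 := le_antisymm (by push_cast at h; linarith) u.2.1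
    have harg : 1 - 2*(1-((0:unitInterval):ℝ))/(2-(u:ℝ)) = 0 := by
      rw [hu0]; push_cast; norm_num
    rw [harg, pI_zero, qmap_base cd hx0]
    exact ⟨RepFb ((w, 0)), rfl⟩
  · rw [if_neg (not_le.2 h)]
    exact ⟨RepFb ((w, (u:ℝ) - 2*((0:unitInterval):ℝ))), rfl⟩

/-- The map `ψ`, the end of the homotopy-extension homotopy. -/
def psiMap (hx0 : x0 ∈ A) : C(TopCone (Fb A x0), TopCone (Fb A x0)) :=
  ⟨fun x => HQ cd hx0 (x, 1),
    (HQ cd hx0).continuous.comp (continuous_id.prodMk continuous_const)⟩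

lemma psiMap_base (hx0 : x0 ∈ A) (w : Fb A x0) :
    psiMap cd hx0 (coneMk w 0) = coneMk w 0 := by
  show HQ cd hx0 (coneMk w 0, 1) = _
  rw [HQ_mk]
  show (if _ then _ else _) = _
  have hneg : ¬ (((1:unitInterval):ℝ) ≤ 2*(((0:unitInterval):ℝ))) := by push_cast; norm_num
  rw [if_neg hneg]
  have he : ((1:unitInterval):ℝ) - 2*(((0:unitInterval):ℝ)) = 1 := by push_cast; norm_num
  rw [he, RepFb_one]

end OnePair4

end PolyFib
end PolyFibAux6
noncomputable section PolyFibAux7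
open unitInterval Set

namespace PolyFib

section OnePair5

variable {X : Type} [TopologicalSpace X] {A : Set X} {x0 : X} (cd : CofibData X A)

/-- The homotopy from `ψ` to the identity of the cone. -/
def LQ (hx0 : x0 ∈ A) : C(TopCone (Fb A x0) × unitInterval, TopCone (Fb A x0)) := by
  refine coneHomotopyMk
    ⟨fun q => coneSqueeze
        (psiMap cd hx0 (coneMk q.1.1 (pI ((q.1.2:ℝ) * min 1 (2 - 2*(q.2:ℝ))))),
          pI ((q.1.2:ℝ) * min 1 (2*(q.2:ℝ)))), ?_⟩ ?_
  · have hu : Continuous fun q : (Fb A x0 × unitInterval) × unitInterval => ((q.2 : ℝ)) :=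
      continuous_subtype_val.comp continuous_snd
    have hθ : Continuous fun q : (Fb A x0 × unitInterval) × unitInterval => ((q.1.2 : ℝ)) :=
      continuous_subtype_val.comp (continuous_snd.comp continuous_fst)
    have hw : Continuous fun q : (Fb A x0 × unitInterval) × unitInterval => q.1.1 :=
      continuous_fst.comp continuous_fst
    apply coneSqueeze.continuous.comp
    apply Continuous.prodMk
    · exact (psiMap cd hx0).continuous.comp (continuous_coneMk.comp (hw.prodMk
        (continuous_pI.comp (hθ.mul (continuous_const.min
          (continuous_const.sub (continuous_const.mul hu)))))))
    · exact continuous_pI.comp (hθ.mul (continuous_const.min (continuous_const.mul hu)))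
  · intro w w' u
    simp only [ContinuousMap.coe_mk]
    rcases le_total ((u:ℝ)) (1/2) with h | h
    · have hb : min 1 (2 - 2*(u:ℝ)) = 1 := min_eq_left (by linarith)
      have hco : pI (((1:unitInterval):ℝ) * min 1 (2 - 2*(u:ℝ))) = 1 := by
        rw [hb]; push_cast; norm_num
      rw [hco]
      have : coneMk w (1:unitInterval) = coneMk w' 1 := coneMk_apex _ _ _ _ rfl rfl
      rw [this]
    · have ha : min 1 (2*(u:ℝ)) = 1 := min_eq_left (by linarith)
      have hco : pI (((1:unitInterval):ℝ) * min 1 (2*(u:ℝ))) = 1 := by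
        rw [ha]; push_cast; norm_num
      rw [hco]
      rw [coneSqueeze_one _ w, coneSqueeze_one _ w]

lemma LQ_mk (hx0 : x0 ∈ A) (w : Fb A x0) (θ u : unitInterval) :
    LQ cd hx0 (coneMk w θ, u) = coneSqueeze
        (psiMap cd hx0 (coneMk w (pI ((θ:ℝ) * min 1 (2 - 2*(u:ℝ))))),
          pI ((θ:ℝ) * min 1 (2*(u:ℝ)))) := by
  simp only [LQ, coneHomotopyMk_mk, ContinuousMap.coe_mk]

lemma LQ_zero (hx0 : x0 ∈ A) (x : TopCone (Fb A x0)) :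
    LQ cd hx0 (x, 0) = psiMap cd hx0 x := by
  induction x using cone_ind with
  | h w θ =>
    rw [LQ_mk]
    have h1 : pI ((θ:ℝ) * min 1 (2 - 2*((0:unitInterval):ℝ))) = θ := by
      have : min 1 (2 - 2*((0:unitInterval):ℝ)) = 1 := by push_cast; norm_num
      rw [this, mul_one, pI_coe]
    have h2 : pI ((θ:ℝ) * min 1 (2*((0:unitInterval):ℝ))) = 0 := by
      have : min 1 (2*((0:unitInterval):ℝ)) = 0 := by push_cast; norm_num
      rw [this, mul_zero, pI_zero]
    rw [h1, h2, coneSqueeze_zero]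

lemma LQ_one (hx0 : x0 ∈ A) (x : TopCone (Fb A x0)) :
    LQ cd hx0 (x, 1) = x := by
  induction x using cone_ind with
  | h w θ =>
    rw [LQ_mk]
    have h1 : pI ((θ:ℝ) * min 1 (2 - 2*((1:unitInterval):ℝ))) = 0 := by
      have : min 1 (2 - 2*((1:unitInterval):ℝ)) = 0 := by push_cast; norm_num
      rw [this, mul_zero, pI_zero]
    have h2 : pI ((θ:ℝ) * min 1 (2*((1:unitInterval):ℝ))) = θ := by
      have : min 1 (2*((1:unitInterval):ℝ)) = 1 := by push_cast; norm_num
      rw [this, mul_one, pI_coe]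
    rw [h1, h2, psiMap_base, coneSqueeze_mk]
    congr 1
    have : ((0:unitInterval):ℝ) + (θ:ℝ) * (1 - ((0:unitInterval):ℝ)) = (θ:ℝ) := by
      push_cast; ring
    rw [this, pI_coe]

lemma LQ_base (hx0 : x0 ∈ A) (w : Fb A x0) (u : unitInterval) :
    LQ cd hx0 (coneMk w 0, u) = coneMk w 0 := by
  rw [LQ_mk]
  have h1 : pI (((0:unitInterval):ℝ) * min 1 (2 - 2*(u:ℝ))) = 0 := by
    push_cast; rw [zero_mul, pI_zero]
  have h2 : pI (((0:unitInterval):ℝ) * min 1 (2*(u:ℝ))) = 0 := by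
    push_cast; rw [zero_mul, pI_zero]
  rw [h1, h2, psiMap_base, coneSqueeze_zero]

end OnePair5

end PolyFib
end PolyFibAux7
noncomputable section PolyFibAux8
open unitInterval Set

namespace PolyFib

section Assembly

variable {m : ℕ} (K : SimplicialComplexOn m) (X : Fin m → Type) [∀ i, TopologicalSpace (X i)]
  (A : ∀ i, Set (X i)) (x0 : ∀ i, X i) (hx0 : ∀ i, x0 i ∈ A i)
  (cds : ∀ i, CofibData (X i) (A i))

/-- The coordinatewise evaluation homotopy on the cone. -/
def evCone (i : Fin m) : C(TopCone (Fb (A i) (x0 i)) × unitInterval, X i) :=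
  ⟨fun p => ((cpath p.1 : Pspace (X i) (x0 i)) : C(unitInterval, X i)) p.2,
    continuous_eval.comp ((continuous_subtype_val.comp
      ((cpath (A := A i) (x0 := x0 i)).continuous.comp continuous_fst)).prodMk
      continuous_snd)⟩

lemma evCone_eq (i : Fin m) (y : TopCone (Fb (A i) (x0 i))) (t : unitInterval) :
    evCone X A x0 i (y, t) = (cpath y).1 t := rfl

lemma cpath_zero_eq_coneFibEval (i : Fin m) (y : TopCone (Fb (A i) (x0 i))) :
    (cpath y).1 0 = coneFibEval (A i) (x0 i) y := by
  induction y using cone_ind with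
  | h w s =>
    rw [cpath_mk_apply]
    show _ = w.1.2 s
    have h : (s:ℝ) + ((0:unitInterval):ℝ)*(1-(s:ℝ)) = (s:ℝ) := by push_cast; ring
    rw [h, evR_coe]

lemma evCone_zero (i : Fin m) (y : TopCone (Fb (A i) (x0 i))) :
    evCone X A x0 i (y, 0) = coneFibEval (A i) (x0 i) y :=
  cpath_zero_eq_coneFibEval X A x0 i y

lemma evCone_one (i : Fin m) (y : TopCone (Fb (A i) (x0 i))) :
    evCone X A x0 i (y, 1) = x0 i := by
  rw [evCone_eq]
  exact (cpath y).2

/-- The inclusion-induced map of the polyhedral products. -/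
abbrev imapP : C(polyProd K (fun i => TopCone (Fb (A i) (x0 i)))
      (fun i => Set.range (coneIncl (Fb (A i) (x0 i)))), polyProd K X A) :=
  polyProdMap K (fun i => coneFibEval (A i) (x0 i)) (fun i => coneFibEval_mapsTo (A i) (x0 i))

/-- The null homotopy of the composite `Z_K(CF, F) → Z_K(X, A) → ∏ X`. -/
def HnullP : ContinuousMap.Homotopy
    ((polyProdProj K X A).comp (imapP K X A x0))
    (ContinuousMap.const _ x0) where
  toFun p := fun i => evCone X A x0 i (p.2.1 i, p.1)
  continuous_toFun := by
    apply continuous_pi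
    intro i
    exact (evCone X A x0 i).continuous.comp
      (((continuous_apply i).comp (continuous_subtype_val.comp continuous_snd)).prodMk
        continuous_fst)
  map_zero_left z := by
    funext i
    exact evCone_zero X A x0 i (z.1 i)
  map_one_left z := by
    funext i
    exact evCone_one X A x0 i (z.1 i)

/-- The comparison map into the homotopy fibre. -/
abbrev fcomp : C(polyProd K (fun i => TopCone (Fb (A i) (x0 i)))
      (fun i => Set.range (coneIncl (Fb (A i) (x0 i)))),
    HFiber (polyProdProj K X A) x0) :=
  hfibCompare (imapP K X A x0) (polyProdProj K X A) x0 (HnullP K X A x0)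

/-- Coordinate evaluation as a continuous map. -/
def evalCM (i : Fin m) : C((∀ j, X j), X i) := ⟨fun f => f i, continuous_apply i⟩

/-- The coordinatewise path extracted from a point of the homotopy fibre. -/
def pathAtCM (i : Fin m) : C(HFiber (polyProdProj K X A) x0, Pspace (X i) (x0 i)) :=
  ⟨fun w => ⟨(evalCM X i).comp w.1.2, congrFun w.2.2 i⟩,
    Continuous.subtype_mk ((ContinuousMap.continuous_postcomp (evalCM X i)).comp
      (continuous_snd.comp continuous_subtype_val)) _⟩

lemma pathAtCM_apply (i : Fin m) (w : HFiber (polyProdProj K X A) x0) (t : unitInterval) :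
    ((pathAtCM K X A x0 i w : Pspace (X i) (x0 i)) : C(unitInterval, X i)) t = w.1.2 t i := rfl

lemma pathAtCM_zero_mem (w : HFiber (polyProdProj K X A) x0) :
    ∃ sig ∈ K.faces, ∀ i, i ∉ sig → ((pathAtCM K X A x0 i w).1 : C(unitInterval, X i)) 0 ∈ A i := by
  obtain ⟨sig, hsig, hA⟩ := w.1.1.2
  refine ⟨sig, hsig, fun i hi => ?_⟩
  have h0 : w.1.2 0 = (w.1.1 : ∀ j, X j) := w.2.1
  show w.1.2 0 i ∈ A i
  rw [h0]
  exact hA i hi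

/-- The homotopy inverse `Ψ` of the comparison map. -/
def PsiBig : C(HFiber (polyProdProj K X A) x0,
    polyProd K (fun i => TopCone (Fb (A i) (x0 i)))
      (fun i => Set.range (coneIncl (Fb (A i) (x0 i))))) := by
  refine ⟨fun w => ⟨fun i => Gmap (cds i) (hx0 i) (pathAtCM K X A x0 i w), ?_⟩, ?_⟩
  · obtain ⟨sig, hsig, hA⟩ := pathAtCM_zero_mem K X A x0 w
    exact ⟨sig, hsig, fun i hi => Gmap_of_mem (cds i) (hx0 i) (hA i hi)⟩
  · apply Continuous.subtype_mk
    apply continuous_pi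
    intro i
    exact (Gmap (cds i) (hx0 i)).continuous.comp (pathAtCM K X A x0 i).continuous

/-- The assembled self-map `q` of the polyhedral product. -/
def QBig : C(polyProd K (fun i => TopCone (Fb (A i) (x0 i)))
      (fun i => Set.range (coneIncl (Fb (A i) (x0 i)))),
    polyProd K (fun i => TopCone (Fb (A i) (x0 i)))
      (fun i => Set.range (coneIncl (Fb (A i) (x0 i))))) := by
  refine ⟨fun z => ⟨fun i => qmap (cds i) (hx0 i) (z.1 i), ?_⟩, ?_⟩
  · obtain ⟨sig, hsig, hA⟩ := z.2
    refine ⟨sig, hsig, fun i hi => ?_⟩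
    obtain ⟨w, hw⟩ := hA i hi
    show qmap (cds i) (hx0 i) (z.1 i) ∈ Set.range (coneIncl (Fb (A i) (x0 i)))
    rw [← hw, coneIncl_eq, qmap_base]
    exact ⟨RepFb ((w, 0)), rfl⟩
  · apply Continuous.subtype_mk
    apply continuous_pi
    intro i
    exact (qmap (cds i) (hx0 i)).continuous.comp
      ((continuous_apply i).comp continuous_subtype_val)

lemma psi_comp_f_eq : (PsiBig K X A x0 hx0 cds).comp (fcomp K X A x0) =
    QBig K X A x0 hx0 cds := by
  apply ContinuousMap.ext
  intro z
  apply Subtype.ext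
  funext i
  show Gmap (cds i) (hx0 i) (pathAtCM K X A x0 i (fcomp K X A x0 z)) =
    qmap (cds i) (hx0 i) (z.1 i)
  have hpath : pathAtCM K X A x0 i (fcomp K X A x0 z) = cpath (z.1 i) := by
    apply Subtype.ext
    apply ContinuousMap.ext
    intro t
    rfl
  rw [hpath]
  rfl

end Assembly

end PolyFib
end PolyFibAux8
noncomputable section PolyFibAux9
open unitInterval Set

namespace PolyFib

section Assembly2

variable {m : ℕ} (K : SimplicialComplexOn m) (X : Fin m → Type) [∀ i, TopologicalSpace (X i)]
  (A : ∀ i, Set (X i)) (x0 : ∀ i, X i) (hx0 : ∀ i, x0 i ∈ A i)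
  (cds : ∀ i, CofibData (X i) (A i))

/-- The assembled map `ψ` on the polyhedral product. -/
def PsiBig2 : C(polyProd K (fun i => TopCone (Fb (A i) (x0 i)))
      (fun i => Set.range (coneIncl (Fb (A i) (x0 i)))),
    polyProd K (fun i => TopCone (Fb (A i) (x0 i)))
      (fun i => Set.range (coneIncl (Fb (A i) (x0 i))))) := by
  refine ⟨fun z => ⟨fun i => psiMap (cds i) (hx0 i) (z.1 i), ?_⟩, ?_⟩
  · obtain ⟨sig, hsig, hA⟩ := z.2
    refine ⟨sig, hsig, fun i hi => ?_⟩
    obtain ⟨w, hw⟩ := hA i hi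
    show psiMap (cds i) (hx0 i) (z.1 i) ∈ Set.range (coneIncl (Fb (A i) (x0 i)))
    rw [← hw, coneIncl_eq, psiMap_base]
    exact ⟨w, rfl⟩
  · apply Continuous.subtype_mk
    apply continuous_pi
    intro i
    exact (psiMap (cds i) (hx0 i)).continuous.comp
      ((continuous_apply i).comp continuous_subtype_val)

/-- The first assembled homotopy: from `q` to `ψ`. -/
def Hom2a : ContinuousMap.Homotopy (QBig K X A x0 hx0 cds) (PsiBig2 K X A x0 hx0 cds) where
  toFun p := ⟨fun i => HQ (cds i) (hx0 i) (p.2.1 i, p.1), by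
    obtain ⟨sig, hsig, hA⟩ := p.2.2
    refine ⟨sig, hsig, fun i hi => ?_⟩
    obtain ⟨w, hw⟩ := hA i hi
    show HQ (cds i) (hx0 i) (p.2.1 i, p.1) ∈ Set.range (coneIncl (Fb (A i) (x0 i)))
    rw [← hw, coneIncl_eq]
    exact HQ_base (cds i) (hx0 i) w p.1⟩
  continuous_toFun := by
    apply Continuous.subtype_mk
    apply continuous_pi
    intro i
    exact (HQ (cds i) (hx0 i)).continuous.comp
      (((continuous_apply i).comp (continuous_subtype_val.comp continuous_snd)).prodMk
        continuous_fst)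
  map_zero_left z := by
    apply Subtype.ext
    funext i
    exact HQ_zero (cds i) (hx0 i) (z.1 i)
  map_one_left z := by
    apply Subtype.ext
    funext i
    rfl

/-- The second assembled homotopy: from `ψ` to the identity. -/
def Hom2b : ContinuousMap.Homotopy (PsiBig2 K X A x0 hx0 cds) (ContinuousMap.id _) where
  toFun p := ⟨fun i => LQ (cds i) (hx0 i) (p.2.1 i, p.1), by
    obtain ⟨sig, hsig, hA⟩ := p.2.2
    refine ⟨sig, hsig, fun i hi => ?_⟩
    obtain ⟨w, hw⟩ := hA i hi
    show LQ (cds i) (hx0 i) (p.2.1 i, p.1) ∈ Set.range (coneIncl (Fb (A i) (x0 i)))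
    rw [← hw, coneIncl_eq, LQ_base]
    exact ⟨w, rfl⟩⟩
  continuous_toFun := by
    apply Continuous.subtype_mk
    apply continuous_pi
    intro i
    exact (LQ (cds i) (hx0 i)).continuous.comp
      (((continuous_apply i).comp (continuous_subtype_val.comp continuous_snd)).prodMk
        continuous_fst)
  map_zero_left z := by
    apply Subtype.ext
    funext i
    exact LQ_zero (cds i) (hx0 i) (z.1 i)
  map_one_left z := by
    apply Subtype.ext
    funext i
    exact LQ_one (cds i) (hx0 i) (z.1 i)

lemma homotopic2 : ((PsiBig K X A x0 hx0 cds).comp (fcomp K X A x0)).Homotopic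
    (ContinuousMap.id _) :=
  ⟨((Hom2a K X A x0 hx0 cds).trans (Hom2b K X A x0 hx0 cds)).cast
    (psi_comp_f_eq K X A x0 hx0 cds).symm rfl⟩

/-- The core of the fibre-side homotopy, assembled. -/
def DBigCore : C((unitInterval × HFiber (polyProdProj K X A) x0) × unitInterval,
    ∀ i, X i) := by
  refine ⟨fun q => fun i => Dc (cds i) ((pathAtCM K X A x0 i q.1.2, q.1.1), q.2), ?_⟩
  apply continuous_pi
  intro i
  exact (Dc (cds i)).continuous.comp
    ((((pathAtCM K X A x0 i).continuous.comp (continuous_snd.comp continuous_fst)).prodMk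
      (continuous_fst.comp continuous_fst)).prodMk continuous_snd)

lemma DBigCore_mem (p : unitInterval × HFiber (polyProdProj K X A) x0) :
    (DBigCore K X A x0 cds).curry p 0 ∈ polyProd K X A := by
  obtain ⟨sig, hsig, hA⟩ := pathAtCM_zero_mem K X A x0 p.2
  refine ⟨sig, hsig, fun i hi => ?_⟩
  exact Dc_start_mem (cds i) (hA i hi) p.1

lemma DBigCore_one (p : unitInterval × HFiber (polyProdProj K X A) x0) :
    (DBigCore K X A x0 cds).curry p 1 = x0 := by
  funext i
  exact Dc_endpoint (cds i) (pathAtCM K X A x0 i p.2) p.1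

/-- The fibre-side assembled homotopy: from `f ∘ Ψ` to the identity. -/
def Hom1 : ContinuousMap.Homotopy
    ((fcomp K X A x0).comp (PsiBig K X A x0 hx0 cds))
    (ContinuousMap.id (HFiber (polyProdProj K X A) x0)) where
  toFun p := ⟨(⟨(DBigCore K X A x0 cds).curry p 0, DBigCore_mem K X A x0 cds p⟩,
      (DBigCore K X A x0 cds).curry p), rfl, DBigCore_one K X A x0 cds p⟩
  continuous_toFun := by
    apply Continuous.subtype_mk
    apply Continuous.prodMk
    · apply Continuous.subtype_mk
      exact continuous_eval.comp
        (((DBigCore K X A x0 cds).curry.continuous).prodMk continuous_const)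
    · exact (DBigCore K X A x0 cds).curry.continuous
  map_zero_left w := by
    apply Subtype.ext
    apply Prod.ext
    · apply Subtype.ext
      funext i
      show Dc (cds i) ((pathAtCM K X A x0 i w, 0), 0) = _
      rw [Dc_zero (cds i) (hx0 i), cpath_zero_eq_coneFibEval]
      rfl
    · apply ContinuousMap.ext
      intro t
      funext i
      show Dc (cds i) ((pathAtCM K X A x0 i w, 0), t) = _
      rw [Dc_zero (cds i) (hx0 i)]
      rfl
  map_one_left w := by
    apply Subtype.ext
    apply Prod.ext
    · apply Subtype.ext
      funext i
      show Dc (cds i) ((pathAtCM K X A x0 i w, 1), 0) = _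
      rw [Dc_one]
      show w.1.2 0 i = _
      rw [congrFun w.2.1 i]
      rfl
    · apply ContinuousMap.ext
      intro t
      funext i
      show Dc (cds i) ((pathAtCM K X A x0 i w, 1), t) = _
      rw [Dc_one]
      rfl

lemma homotopic1 : ((fcomp K X A x0).comp (PsiBig K X A x0 hx0 cds)).Homotopic
    (ContinuousMap.id _) :=
  ⟨Hom1 K X A x0 hx0 cds⟩

end Assembly2

end PolyFib
end PolyFibAux9


/-- Proposition 3.3 of the paper: the homotopy fibration
`Z_K(CF, F) → Z_K(X, A) → ∏ᵢ Xᵢ`. -/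
theorem polyProd_fibration {m : ℕ} (K : SimplicialComplexOn m) (X : Fin m → Type)
    [∀ i, TopologicalSpace (X i)] (A : ∀ i, Set (X i)) (x0 : ∀ i, X i)
    (hx0 : ∀ i, x0 i ∈ A i) (hNDR : ∀ i, IsNDRPair (A i)) :
    IsHomotopyFibration
      (polyProdMap K (fun i => coneFibEval (A i) (x0 i))
        (fun i => coneFibEval_mapsTo (A i) (x0 i)))
      (polyProdProj K X A) := by
  have cds : ∀ i, PolyFib.CofibData (X i) (A i) :=
    fun i => Classical.choice (PolyFib.exists_cofibData (hNDR i))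
  exact ⟨x0, PolyFib.HnullP K X A x0, PolyFib.PsiBig K X A x0 hx0 cds,
    PolyFib.homotopic2 K X A x0 hx0 cds, PolyFib.homotopic1 K X A x0 hx0 cds⟩
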